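/- arXiv:2507.02701 — 3 statements merged into one kernel-verified Lean document; each statement's English description precedes it below -/
import Mathlib

section
/- If a string Q ∈ P_Σ* contains equally many opening and closing parentheses and its square Q² is a substring of some balanced string (i.e., Q² ∈ F^sub_Σ), then Q has a balanced cyclic rotation: there exists i ∈ [0..|Q|] such that Q[i..|Q|)·Q[0..i) ∈ F_Σ. -/
open scoped NNReal ENNReal

attribute [local instance] Classical.propDecidable

/-- A labeled parenthesis over the alphabet `α`: `(true, a)` is the opening
parenthesis with label `a`, and `(false, a)` is the closing parenthesis. -/
abbrev Paren (α : Type*) := Bool × α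

/-- Balanced strings of labeled parentheses (forests), following Definition 2.1:
the smallest set containing the empty string, closed under concatenation, and
containing `(_a · F · )_a` for every forest `F` and label `a`. -/
inductive IsForest {α : Type*} : List (Paren α) → Prop
  | nil : IsForest []
  | append {F G : List (Paren α)} : IsForest F → IsForest G → IsForest (F ++ G)
  | wrap {F : List (Paren α)} (a : α) : IsForest F → IsForest ((true, a) :: F ++ [(false, a)])

/-- The fragment `l[i..j)` of a list. -/
def frag {β : Type*} (l : List β) (i j : ℕ) : List β := (l.take j).drop i

namespace BCR
variable {α : Type*}

noncomputable def pstep : Option (List α) → Paren α → Option (List α)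
  | none, _ => none
  | some st, (true, a) => some (a :: st)
  | some st, (false, a) =>
    match st with
    | [] => none
    | b :: rest => if a = b then some rest else none

@[simp] theorem pstep_none (p : Paren α) : pstep none p = none := by
  obtain ⟨b, a⟩ := p; cases b <;> rfl

@[simp] theorem pstep_open (s : List α) (a : α) : pstep (some s) (true, a) = some (a :: s) := rfl

@[simp] theorem pstep_close_nil (a : α) : pstep (some ([] : List α)) (false, a) = none := rfl

@[simp] theorem pstep_close_cons (s : List α) (a b : α) :
    pstep (some (b :: s)) (false, a) = if a = b then some s else none := rfl

theorem foldl_none (L : List (Paren α)) : L.foldl pstep none = none := by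
  induction L with
  | nil => rfl
  | cons p L ih => simpa using ih

theorem exists_some {L : List (Paren α)} {o : Option (List α)} {t : List α}
    (h : L.foldl pstep o = some t) : ∃ s, o = some s := by
  cases o with
  | none => simp [foldl_none] at h
  | some s => exact ⟨s, rfl⟩

theorem step_cons {p : Paren α} {L : List (Paren α)} {s t : List α}
    (h : (p :: L).foldl pstep (some s) = some t) :
    ∃ s', pstep (some s) p = some s' ∧ L.foldl pstep (some s') = some t := by
  rw [List.foldl_cons] at h
  obtain ⟨s', hs'⟩ := exists_some h
  exact ⟨s', hs', by rwa [hs'] at h⟩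

theorem frame {L : List (Paren α)} : ∀ {s t : List α}, L.foldl pstep (some s) = some t →
    ∀ r, L.foldl pstep (some (s ++ r)) = some (t ++ r) := by
  induction L with
  | nil => intro s t h r; simp_all
  | cons p L ih =>
    intro s t h r
    obtain ⟨s', h1, h2⟩ := step_cons h
    obtain ⟨b, a⟩ := p
    cases b with
    | true =>
      simp only [pstep_open, Option.some.injEq] at h1
      subst h1
      simpa using ih h2 r
    | false =>
      cases s with
      | nil => simp at h1
      | cons c s0 =>
        rw [pstep_close_cons] at h1
        by_cases hac : a = c
        · rw [if_pos hac] at h1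
          cases h1
          subst hac
          rw [List.cons_append, List.foldl_cons, pstep_close_cons, if_pos rfl]
          exact ih h2 r
        · rw [if_neg hac] at h1; exact absurd h1 (by simp)

/-- signed height -/
def hh (L : List (Paren α)) : ℤ :=
  (L.countP (fun p => p.1) : ℤ) - (L.countP (fun p => !p.1) : ℤ)

@[simp] theorem hh_nil : hh ([] : List (Paren α)) = 0 := by simp [hh]

theorem hh_append (L M : List (Paren α)) : hh (L ++ M) = hh L + hh M := by
  simp [hh, List.countP_append]; ring

theorem hh_cons_open (a : α) (L : List (Paren α)) : hh ((true, a) :: L) = 1 + hh L := by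
  simp [hh, List.countP_cons]; ring

theorem hh_cons_close (a : α) (L : List (Paren α)) : hh ((false, a) :: L) = hh L - 1 := by
  simp [hh, List.countP_cons]; ring

theorem run_length : ∀ (L : List (Paren α)) {s t : List α},
    L.foldl pstep (some s) = some t → (t.length : ℤ) = s.length + hh L := by
  intro L
  induction L with
  | nil => intro s t h; simp at h; subst h; simp
  | cons p L ih =>
    intro s t h
    obtain ⟨s', h1, h2⟩ := step_cons h
    obtain ⟨b, a⟩ := p
    cases b with
    | true =>
      simp only [pstep_open, Option.some.injEq] at h1; subst h1
      rw [ih h2, hh_cons_open]; simp; ring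
    | false =>
      cases s with
      | nil => simp at h1
      | cons c s0 =>
        rw [pstep_close_cons] at h1
        by_cases hac : a = c
        · rw [if_pos hac] at h1; cases h1
          rw [ih h2, hh_cons_close]; simp
        · rw [if_neg hac] at h1; exact absurd h1 (by simp)

theorem deframe : ∀ (L : List (Paren α)) (u s t : List α),
    L.foldl pstep (some (u ++ s)) = some t →
    (∀ m, ((L.take m).countP (fun p => !p.1) : ℤ) ≤ (L.take m).countP (fun p => p.1) + u.length) →
    ∃ t', L.foldl pstep (some u) = some t' ∧ t = t' ++ s := by
  intro L
  induction L with
  | nil => intro u s t h hm; simp at h; exact ⟨u, rfl, h.symm⟩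
  | cons p L ih =>
    intro u s t h hm
    obtain ⟨s', h1, h2⟩ := step_cons h
    obtain ⟨b, a⟩ := p
    cases b with
    | true =>
      simp only [pstep_open, Option.some.injEq] at h1
      have h1' : s' = (a :: u) ++ s := by rw [← h1]; rfl
      subst h1'
      obtain ⟨t', ht1, ht2⟩ := ih (a :: u) s t h2 (by
        intro m
        have := hm (m + 1)
        simp [List.countP_cons] at this ⊢
        omega)
      exact ⟨t', by simpa using ht1, ht2⟩
    | false =>
      cases u with
      | nil =>
        exfalso
        have := hm 1
        simp [List.countP_cons] at this
      | cons c u0 =>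
        rw [List.cons_append, pstep_close_cons] at h1
        by_cases hac : a = c
        · rw [if_pos hac] at h1; cases h1
          subst hac
          obtain ⟨t', ht1, ht2⟩ := ih u0 s t h2 (by
            intro m
            have := hm (m + 1)
            simp [List.countP_cons] at this ⊢
            omega)
          exact ⟨t', by simp [ht1], ht2⟩
        · rw [if_neg hac] at h1; exact absurd h1 (by simp)


theorem forest_run {F : List (Paren α)} (h : IsForest F) :
    F.foldl pstep (some []) = some [] := by
  induction h with
  | nil => rfl
  | append _ _ ih1 ih2 => rw [List.foldl_append, ih1, ih2]
  | wrap a _ ih =>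
    rename_i F _
    rw [List.foldl_append, List.foldl_cons, List.foldl_cons]
    have h0 : pstep (some ([] : List α)) (true, a) = some [a] := rfl
    rw [h0]
    have hF : F.foldl pstep (some ([] ++ [a])) = some ([] ++ [a]) := frame ih [a]
    simp only [List.nil_append] at hF
    rw [hF]
    simp

theorem aux_pop : ∀ (n : ℕ) (M : List (Paren α)) (a : α) (sk : List α), M.length ≤ n →
    M.foldl pstep (some (a :: sk)) = some [] →
    ∃ F G, M = F ++ (false, a) :: G ∧ F.foldl pstep (some ([] : List α)) = some [] ∧
      G.foldl pstep (some sk) = some [] := by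
  intro n
  induction n with
  | zero =>
    intro M a sk hlen h
    rw [List.length_eq_zero_iff.mp (Nat.le_zero.mp hlen)] at h
    simp at h
  | succ n ih =>
    intro M a sk hlen h
    match M with
    | [] => simp at h
    | (b', c) :: M' =>
      obtain ⟨s', h1, h2⟩ := step_cons h
      cases b' with
      | false =>
        rw [pstep_close_cons] at h1
        by_cases hc : c = a
        · subst hc
          rw [if_pos rfl] at h1
          cases h1
          exact ⟨[], M', rfl, rfl, h2⟩
        · rw [if_neg hc] at h1; exact absurd h1 (by simp)
      | true =>
        simp only [pstep_open, Option.some.injEq] at h1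
        subst h1
        simp only [List.length_cons, Nat.succ_le_succ_iff] at hlen
        obtain ⟨F1, G1, hM', hF1, hG1⟩ := ih M' c (a :: sk) hlen h2
        have hG1len : G1.length ≤ n := by
          have : M'.length = F1.length + (1 + G1.length) := by
            rw [hM']; simp [List.length_append]; ring
          omega
        obtain ⟨F2, G2, hG1', hF2, hG2⟩ := ih G1 a sk hG1len hG1
        refine ⟨(true, c) :: F1 ++ (false, c) :: F2, G2, ?_, ?_, hG2⟩
        · rw [hM', hG1']; simp
        · have hw : ((true, c) :: F1 ++ [(false, c)] : List (Paren α)).foldl pstep (some [])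
              = some [] := by
            rw [List.foldl_append, List.foldl_cons, List.foldl_cons]
            have h0 : pstep (some ([] : List α)) (true, c) = some [c] := rfl
            rw [h0]
            have hF : F1.foldl pstep (some ([] ++ [c])) = some ([] ++ [c]) := frame hF1 [c]
            simp only [List.nil_append] at hF
            rw [hF]
            simp
          rw [show ((true, c) :: F1 ++ (false, c) :: F2 : List (Paren α))
              = ((true, c) :: F1 ++ [(false, c)]) ++ F2 by simp]
          rw [List.foldl_append, hw]
          exact hF2


theorem run_forest : ∀ (n : ℕ) (L : List (Paren α)), L.length ≤ n →
    L.foldl pstep (some []) = some [] → IsForest L := by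
  intro n
  induction n with
  | zero =>
    intro L hlen _
    rw [List.length_eq_zero_iff.mp (Nat.le_zero.mp hlen)]
    exact IsForest.nil
  | succ n ih =>
    intro L hlen h
    match L with
    | [] => exact IsForest.nil
    | (b, a) :: M =>
      obtain ⟨s', h1, h2⟩ := step_cons h
      cases b with
      | false => simp at h1
      | true =>
        simp only [pstep_open, Option.some.injEq] at h1
        subst h1
        simp only [List.length_cons, Nat.succ_le_succ_iff] at hlen
        obtain ⟨F, G, hM, hF, hG⟩ := aux_pop M.length M a [] le_rfl h2
        have hlens : M.length = F.length + (1 + G.length) := by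
          rw [hM]; simp [List.length_append]; ring
        have hFor : IsForest F := ih F (by omega) hF
        have hGor : IsForest G := ih G (by omega) hG
        have : ((true, a) :: M : List (Paren α))
            = ((true, a) :: F ++ [(false, a)]) ++ G := by rw [hM]; simp
        rw [this]
        exact IsForest.append (IsForest.wrap a hFor) hGor

end BCR

/-- Lemma C.4: if `Q ∈ P_Σ*` has equally many opening and
closing parentheses and `Q²` is a substring of some balanced string, then some
cyclic rotation `Q[i..|Q|) · Q[0..i)` of `Q` is balanced. -/


theorem balanced_cyclic_rotation {α : Type*} (Q : List (Paren α))
    (heq : Q.countP (fun p => p.1) = Q.countP (fun p => !p.1))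
    (hsub : ∃ G : List (Paren α), IsForest G ∧ (Q ++ Q) <:+: G) :
    ∃ i ≤ Q.length, IsForest (Q.drop i ++ Q.take i) := by
  classical
  obtain ⟨G, hG, u, v, rfl⟩ := hsub
  have hrunG := BCR.forest_run hG
  rw [List.foldl_append, List.foldl_append] at hrunG
  obtain ⟨w, hw⟩ := BCR.exists_some hrunG
  obtain ⟨s, hs⟩ := BCR.exists_some hw
  rw [hs] at hw
  -- hw : (Q ++ Q).foldl pstep (some s) = some w
  set o : ℕ → ℤ := fun j => BCR.hh (Q.take j) with ho
  have hQ0 : BCR.hh Q = 0 := by simp [BCR.hh, heq]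
  obtain ⟨i, hi, hmin⟩ := Finset.exists_min_image (Finset.range (Q.length + 1)) o
    ⟨0, by simp⟩
  rw [Finset.mem_range] at hi
  have hile : i ≤ Q.length := by omega
  have hminall : ∀ j, o i ≤ o j := by
    intro j
    have hj : o j = o (min j Q.length) := by
      simp only [ho]
      congr 1
      rw [List.take_eq_take_iff]
      omega
    rw [hj]
    exact hmin _ (Finset.mem_range.mpr (by omega))
  set R : List (Paren α) := Q.drop i ++ Q.take i with hR
  have hsplit : Q.take i ++ (R ++ Q.drop i) = Q ++ Q := by
    simp only [hR, ← List.append_assoc, List.take_append_drop]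
    rw [List.append_assoc, List.take_append_drop]
  rw [← hsplit, List.foldl_append, List.foldl_append] at hw
  obtain ⟨w1, hw1⟩ := BCR.exists_some hw
  obtain ⟨v1, hv1⟩ := BCR.exists_some hw1
  rw [hv1] at hw1
  -- hw1 : R.foldl pstep (some v1) = some w1
  have hRQ : BCR.hh R = 0 := by
    rw [hR, BCR.hh_append, ← hQ0]
    conv_rhs => rw [← List.take_append_drop i Q]
    rw [BCR.hh_append]
    ring
  have hpos : ∀ m, 0 ≤ BCR.hh (R.take m) := by
    intro m
    rw [hR, List.take_append, BCR.hh_append, List.length_drop,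
      List.take_take]
    have e1 : BCR.hh ((Q.drop i).take m) = o (i + m) - o i := by
      have h2 : Q.take (i + m) = Q.take i ++ (Q.drop i).take m := List.take_add ..
      have h3 : o (i + m) = o i + BCR.hh ((Q.drop i).take m) := by
        simp only [ho]
        rw [h2, BCR.hh_append]
      omega
    have e2 : o i ≤ o (min (m - (Q.length - i)) i) := hminall _
    by_cases hm : m ≤ Q.length - i
    · have hz : m - (Q.length - i) = 0 := by omega
      rw [hz, Nat.zero_min, List.take_zero, BCR.hh_nil]
      have h4 := hminall (i + m)
      linarith
    · have h5 : Q.length ≤ i + m := by omega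
      have h6 : o (i + m) = 0 := by
        simp only [ho]
        rw [List.take_of_length_le h5]
        exact hQ0
      have h7 : BCR.hh (Q.take (min (m - (Q.length - i)) i))
          = o (min (m - (Q.length - i)) i) := by simp only [ho]
      linarith
  obtain ⟨t', ht', hteq⟩ := BCR.deframe R [] v1 w1 (by simpa using hw1) (by
    intro m
    have := hpos m
    simp only [BCR.hh] at this
    simp only [List.length_nil, Nat.cast_zero, add_zero]
    omega)
  have hlen : (w1.length : ℤ) = v1.length + BCR.hh R := BCR.run_length R hw1
  rw [hRQ, add_zero] at hlen
  have ht'nil : t' = [] := by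
    have : w1.length = t'.length + v1.length := by rw [hteq]; simp
    have : t'.length = 0 := by omega
    exact List.length_eq_zero_iff.mp this
  rw [ht'nil] at ht'
  exact ⟨i, hile, BCR.run_forest R.length R le_rfl ht'⟩
end

section
/- For all forests F, G ∈ F_Σ, fragments F[f..f') and G[g..g'), and weight functions w : (Σ∪{ε})² → ℝ≥0, one has t̃ed^w(F[f..f'), G[g..g')) = ted^w(F_{[f..f')}, G_{[g..g')}), where F_{[f..f')} and G_{[g..g')} are the induced subforests. -/
open scoped NNReal ENNReal

attribute [local instance] Classical.propDecidable

/-- `IsNode F i j` means that `[i..j]` is a node of the forest `F`: `F[i]` is an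
opening parenthesis, `F[j]` is a closing parenthesis with the same label,
and `F(i..j)` is balanced. -/
def IsNode {α : Type*} (F : List (Paren α)) (i j : ℕ) : Prop :=
  i < j ∧ j < F.length ∧ (∃ a : α, F[i]? = some (true, a) ∧ F[j]? = some (false, a)) ∧
    IsForest (frag F (i + 1) j)

/-- `MateRel F i j` holds when positions `i` and `j` are the paired parentheses
of a node of `F` (in either order); `j` is the mate of `i`. -/
def MateRel {α : Type*} (F : List (Paren α)) (i j : ℕ) : Prop :=
  IsNode F i j ∨ IsNode F j i

/-- A single edge of the alignment graph: horizontal, vertical, or diagonal. -/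
def AlignStep (p q : ℕ × ℕ) : Prop :=
  q = (p.1 + 1, p.2) ∨ q = (p.1, p.2 + 1) ∨ q = (p.1 + 1, p.2 + 1)

/-- An alignment of `X[x..x')` onto `Y[y..y')` is a path in the alignment graph
from `(x, y)` to `(x', y')`, interpreted as its sequence of vertices. -/
def IsAlignment (x x' y y' : ℕ) (path : List (ℕ × ℕ)) : Prop :=
  path.head? = some (x, y) ∧ path.getLast? = some (x', y') ∧ path.Chain' AlignStep

/-- The alignment (path) aligns character `f` of `X` to character `g` of `Y`
(a diagonal edge `(f, g) → (f + 1, g + 1)`). -/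
def AlignsAt (path : List (ℕ × ℕ)) (f g : ℕ) : Prop :=
  ∃ t, path[t]? = some (f, g) ∧ path[t + 1]? = some (f + 1, g + 1)

/-- The alignment deletes character `f` of `X` (a horizontal edge). -/
def DeletesAt (path : List (ℕ × ℕ)) (f : ℕ) : Prop :=
  ∃ t g, path[t]? = some (f, g) ∧ path[t + 1]? = some (f + 1, g)

/-- The alignment inserts character `g` of `Y` (a vertical edge). -/
def InsertsAt (path : List (ℕ × ℕ)) (g : ℕ) : Prop :=
  ∃ t f, path[t]? = some (f, g) ∧ path[t + 1]? = some (f, g + 1)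

/-- Consistency condition of forest alignments (Definition 2.6): whenever the
alignment aligns `F[f]` to `G[g]`, it also aligns the mate of `F[f]` to the mate
of `G[g]`.  An alignment satisfying this condition is a forest alignment. -/
def Consistent {α : Type*} (F G : List (Paren α)) (path : List (ℕ × ℕ)) : Prop :=
  ∀ f g f' g', AlignsAt path f g → MateRel F f f' → MateRel G g g' → AlignsAt path f' g'

/-- The width of the alignment is at most `m`: every vertex `(x, y)` on the path
satisfies `|x - y| ≤ m`. -/
def WidthLE (m : ℕ) (path : List (ℕ × ℕ)) : Prop :=
  ∀ p ∈ path, p.1 ≤ p.2 + m ∧ p.2 ≤ p.1 + m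

/-- The label of the `i`-th character of `X` (as an element of `Σ ∪ {ε}`,
encoded by `Option α`; out-of-range positions give `ε`). -/
def lbl {α : Type*} (X : List (Paren α)) (i : ℕ) : Option α := (X[i]?).map Prod.snd

/-- Cost of an alignment path with respect to the weight function `w̃(p, q) = ½·w(λ(p), λ(q))`:
horizontal edges cost `½·w(λ(X[x]), ε)`, vertical edges `½·w(ε, λ(Y[y]))`, and
diagonal edges `½·w(λ(X[x]), λ(Y[y]))`. -/
noncomputable def pathCost {α : Type*} (w : Option α → Option α → ℝ≥0)
    (X Y : List (Paren α)) : List (ℕ × ℕ) → ℝ≥0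
  | [] => 0
  | [_] => 0
  | p :: q :: rest =>
      (if q.1 = p.1 + 1 ∧ q.2 = p.2 then (1 / 2 : ℝ≥0) * w (lbl X p.1) none
       else if q.1 = p.1 ∧ q.2 = p.2 + 1 then (1 / 2 : ℝ≥0) * w none (lbl Y p.2)
       else (1 / 2 : ℝ≥0) * w (lbl X p.1) (lbl Y p.2)) + pathCost w X Y (q :: rest)

/-- A weight function `w : (Σ ∪ {ε})² → ℝ≥0` is normalized if `w(a, a) = 0` and
`w(a, b) ≥ 1` for distinct `a, b`. -/
def Normalized {α : Type*} (w : Option α → Option α → ℝ≥0) : Prop :=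
  (∀ a, w a a = 0) ∧ ∀ a b, a ≠ b → 1 ≤ w a b

/-- A weight function satisfies the triangle inequality (is a quasimetric). -/
def Quasimetric {α : Type*} (w : Option α → Option α → ℝ≥0) : Prop :=
  ∀ a b c, w a c ≤ w a b + w b c

/-- The weighted tree edit distance `ted^w(F[f..f'), G[g..g'))`: the minimum cost
of a forest alignment of the fragment `F[f..f')` onto the fragment `G[g..g')`
(`∞` if no forest alignment exists). -/
noncomputable def tedFrag {α : Type*} (w : Option α → Option α → ℝ≥0)
    (F G : List (Paren α)) (f f' g g' : ℕ) : ℝ≥0∞ :=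
  ⨅ p : { p : List (ℕ × ℕ) // IsAlignment f f' g g' p ∧ Consistent F G p },
    (pathCost w F G p.1 : ℝ≥0∞)

/-- The bounded tree edit distance `bted_k^w(F[f..f'), G[g..g'))`: the minimum
cost of a forest alignment of width at most `2k` (`∞` if none exists). -/
noncomputable def btedFrag {α : Type*} (k : ℕ) (w : Option α → Option α → ℝ≥0)
    (F G : List (Paren α)) (f f' g g' : ℕ) : ℝ≥0∞ :=
  ⨅ p : { p : List (ℕ × ℕ) //
      IsAlignment f f' g g' p ∧ Consistent F G p ∧ WidthLE (2 * k) p },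
    (pathCost w F G p.1 : ℝ≥0∞)

/-- The subforest of `F` induced by the fragment `F[i..j)`: obtained from
`F[i..j)` by deleting every parenthesis whose mate lies outside `[i..j)`. -/
noncomputable def induced {α : Type*} (F : List (Paren α)) (i j : ℕ) : List (Paren α) :=
  (List.range F.length).filterMap fun p =>
    if i ≤ p ∧ p < j ∧ ∃ q, i ≤ q ∧ q < j ∧ MateRel F p q then F[p]? else none

/-- The total `w̃`-cost of deleting the characters of `F[f..f')` whose mates lie
outside `[f..f')` and inserting the characters of `G[g..g')` whose mates lie
outside `[g..g')`. -/
noncomputable def straddleCost {α : Type*} (w : Option α → Option α → ℝ≥0)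
    (F G : List (Paren α)) (f f' g g' : ℕ) : ℝ≥0 :=
  (∑ i ∈ Finset.Ico f f',
      if ∃ q, f ≤ q ∧ q < f' ∧ MateRel F i q then 0
      else (1 / 2 : ℝ≥0) * w (lbl F i) none) +
  (∑ j ∈ Finset.Ico g g',
      if ∃ q, g ≤ q ∧ q < g' ∧ MateRel G j q then 0
      else (1 / 2 : ℝ≥0) * w none (lbl G j))

/-- The adjusted tree edit distance
`t̃ed^w(F[f..f'), G[g..g')) = min over forest alignments A of
(ted^w_A(F[f..f'), G[g..g')) − straddling cost)`. -/
noncomputable def tedTilde {α : Type*} (w : Option α → Option α → ℝ≥0)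
    (F G : List (Paren α)) (f f' g g' : ℕ) : ℝ≥0∞ :=
  ⨅ p : { p : List (ℕ × ℕ) // IsAlignment f f' g g' p ∧ Consistent F G p },
    ((pathCost w F G p.1 : ℝ≥0∞) - (straddleCost w F G f f' g g' : ℝ≥0∞))

namespace TedAux
variable {α : Type*}

/-! ### Depth function and balance -/

def delta (p : Paren α) : ℤ := if p.1 then 1 else -1

def dep (S : List (Paren α)) (x : ℕ) : ℤ := ((S.take x).map delta).sum

@[simp] lemma dep_zero (S : List (Paren α)) : dep S 0 = 0 := rfl

lemma dep_succ (S : List (Paren α)) (x : ℕ) :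
    dep S (x + 1) = dep S x + (S[x]?.elim 0 delta) := by
  unfold dep
  rw [List.take_succ, List.map_append, List.sum_append]
  congr 1
  cases h : S[x]? <;> simp [h]

lemma dep_cons_succ (p : Paren α) (S : List (Paren α)) (x : ℕ) :
    dep (p :: S) (x + 1) = delta p + dep S x := by
  unfold dep
  rw [List.take_succ_cons, List.map_cons, List.sum_cons]

lemma dep_append (S T : List (Paren α)) (x : ℕ) :
    dep (S ++ T) x = dep S x + dep T (x - S.length) := by
  unfold dep
  rw [List.take_append, List.map_append, List.sum_append]

lemma dep_of_length_le (S : List (Paren α)) {x : ℕ} (h : S.length ≤ x) :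
    dep S x = dep S S.length := by
  unfold dep
  rw [List.take_of_length_le h, List.take_length]

lemma dep_singleton (p : Paren α) (x : ℕ) :
    dep [p] x = if x = 0 then 0 else delta p := by
  cases x with
  | zero => simp
  | succ n => rw [dep_cons_succ]; simp [dep]

lemma isForest_balance {S : List (Paren α)} (h : IsForest S) :
    dep S S.length = 0 ∧ ∀ x, 0 ≤ dep S x := by
  induction h with
  | nil => exact ⟨rfl, fun x => le_of_eq (by simp [dep])⟩
  | append hF hG ihF ihG =>
    constructor
    · rw [List.length_append, dep_append, dep_of_length_le _ (by omega), ihF.1]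
      simpa using ihG.1
    · intro x
      rw [dep_append]
      exact add_nonneg (ihF.2 x) (ihG.2 _)
  | @wrap F a hF ih =>
    have hlen : ((true, a) :: F ++ [(false, a)]).length = F.length + 2 := by simp
    have hd : ∀ x, dep ((true, a) :: F ++ [(false, a)]) (x + 1)
        = 1 + dep F x + (if x ≤ F.length then 0 else -1) := by
      intro x
      rw [List.cons_append, dep_cons_succ, dep_append, dep_singleton]
      have : delta ((true, a) : Paren α) = 1 := rfl
      rw [this]
      by_cases hx : x ≤ F.length
      · simp [Nat.sub_eq_zero_of_le hx, hx, delta]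
      · have h0 : x - F.length ≠ 0 := by omega
        simp [h0, hx, delta]
    constructor
    · rw [hlen]
      have := hd (F.length + 1)
      rw [this, dep_of_length_le _ (by omega), ih.1]
      simp
    · intro x
      cases x with
      | zero => simp
      | succ n =>
        rw [hd n]
        by_cases hn : n ≤ F.length
        · have := ih.2 n; simp [hn]; omega
        · rw [dep_of_length_le _ (by omega), ih.1]; simp [hn]

lemma length_frag (S : List (Paren α)) (a b : ℕ) :
    (frag S a b).length = min b S.length - a := by
  simp [frag]

lemma frag_getElem? (S : List (Paren α)) (a b t : ℕ) :
    (frag S a b)[t]? = if a + t < b then S[a + t]? else none := by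
  unfold frag
  rw [List.getElem?_drop, List.getElem?_take]

lemma dep_frag (S : List (Paren α)) {a b t : ℕ} (h : a + t ≤ b) :
    dep (frag S a b) t = dep S (a + t) - dep S a := by
  have h1 : (frag S a b).take t = ((S.take b).take (a + t)).drop a := by
    unfold frag
    rw [List.take_drop]
  rw [List.take_take, min_eq_left h] at h1
  have h2 : S.take (a + t) = S.take a ++ ((S.take (a+t)).drop a) := by
    conv_lhs => rw [← List.take_append_drop a (S.take (a+t))]
    rw [List.take_take, min_eq_left (by omega)]
  have : dep S (a + t) = dep S a + ((((S.take (a+t)).drop a)).map delta).sum := by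
    unfold dep
    conv_lhs => rw [h2]
    rw [List.map_append, List.sum_append]
  rw [this]
  unfold dep
  rw [h1]
  ring

end TedAux
namespace TedAux
variable {α : Type*}

/-! ### Match: depth characterization of nodes -/

def Opens (S : List (Paren α)) (i : ℕ) : Prop := (S[i]?).map Prod.fst = some true
def Closes (S : List (Paren α)) (i : ℕ) : Prop := (S[i]?).map Prod.fst = some false

def Match (S : List (Paren α)) (i j : ℕ) : Prop :=
  i < j ∧ j < S.length ∧ Opens S i ∧ Closes S j ∧ dep S (j + 1) = dep S i ∧
    ∀ x, i < x → x ≤ j → dep S i < dep S x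

lemma not_opens_and_closes {S : List (Paren α)} {i : ℕ} (h1 : Opens S i) (h2 : Closes S i) :
    False := by
  unfold Opens Closes at *
  rw [h1] at h2
  exact Bool.noConfusion (Option.some.inj h2)

lemma isNode_match {S : List (Paren α)} {i j : ℕ} (h : IsNode S i j) : Match S i j := by
  obtain ⟨hij, hj, ⟨a, hia, hja⟩, hfor⟩ := h
  have hbal := isForest_balance hfor
  have hdi : dep S (i + 1) = dep S i + 1 := by
    rw [dep_succ, hia]; simp [delta]
  have hdj : dep S (j + 1) = dep S j - 1 := by
    rw [dep_succ, hja]; simp [delta, sub_eq_add_neg]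
  have hlen : (frag S (i + 1) j).length = j - (i + 1) := by
    rw [length_frag]; omega
  have key : ∀ t, i + 1 + t ≤ j → dep S (i + 1 + t) = dep S (i + 1) + dep (frag S (i + 1) j) t := by
    intro t ht
    rw [dep_frag S ht]; ring
  have hmid : ∀ x, i < x → x ≤ j → dep S i < dep S x := by
    intro x hx1 hx2
    have hx : x = i + 1 + (x - (i + 1)) := by omega
    rw [hx, key _ (by omega), hdi]
    have := hbal.2 (x - (i + 1))
    omega
  have hdepj : dep S j = dep S i + 1 := by
    have := key (j - (i + 1)) (by omega)
    rw [show i + 1 + (j - (i + 1)) = j by omega] at this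
    rw [← hlen] at this
    rw [this, hbal.1, hdi]; ring
  refine ⟨hij, hj, ?_, ?_, by omega, hmid⟩
  · unfold Opens; rw [hia]; rfl
  · unfold Closes; rw [hja]; rfl

lemma match_unique_right {S : List (Paren α)} {i j j' : ℕ}
    (h : Match S i j) (h' : Match S i j') : j = j' := by
  have hij := h.1
  have hij' := h'.1
  rcases lt_trichotomy j j' with hlt | heq | hgt
  · exfalso
    have := h'.2.2.2.2.2 (j + 1) (by omega) (by omega)
    rw [h.2.2.2.2.1] at this
    omega
  · exact heq
  · exfalso
    have := h.2.2.2.2.2 (j' + 1) (by omega) (by omega)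
    rw [h'.2.2.2.2.1] at this
    omega

lemma match_unique_left {S : List (Paren α)} {i i' j : ℕ}
    (h : Match S i j) (h' : Match S i' j) : i = i' := by
  have e : dep S i = dep S i' := by
    rw [← h.2.2.2.2.1, ← h'.2.2.2.2.1]
  rcases lt_trichotomy i i' with hlt | heq | hgt
  · exfalso
    have := h.2.2.2.2.2 i' hlt (le_of_lt h'.1)
    omega
  · exact heq
  · exfalso
    have := h'.2.2.2.2.2 i hgt (le_of_lt h.1)
    omega

lemma isNode_opens {S : List (Paren α)} {i j : ℕ} (h : IsNode S i j) : Opens S i :=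
  (isNode_match h).2.2.1

lemma isNode_closes {S : List (Paren α)} {i j : ℕ} (h : IsNode S i j) : Closes S j :=
  (isNode_match h).2.2.2.1

/-! ### Node embeddings -/

lemma frag_append_left {F G : List (Paren α)} {a j : ℕ} (hj : j ≤ F.length) :
    frag (F ++ G) a j = frag F a j := by
  unfold frag
  rw [List.take_append, Nat.sub_eq_zero_of_le hj]
  simp

lemma frag_append_right (F G : List (Paren α)) (a b : ℕ) :
    frag (F ++ G) (F.length + a) (F.length + b) = frag G a b := by
  unfold frag
  rw [List.take_append, List.take_of_length_le (by omega),
    Nat.add_sub_cancel_left, List.drop_append,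
    List.drop_of_length_le (by omega), Nat.add_sub_cancel_left]
  simp

lemma frag_cons (p : Paren α) (L : List (Paren α)) (a b : ℕ) :
    frag (p :: L) (a + 1) (b + 1) = frag L a b := by
  unfold frag
  rw [List.take_succ_cons, List.drop_succ_cons]

lemma node_append_left {F G : List (Paren α)} {i j : ℕ} (h : IsNode F i j) :
    IsNode (F ++ G) i j := by
  obtain ⟨hij, hj, ⟨a, hia, hja⟩, hfor⟩ := h
  refine ⟨hij, by simp; omega, ⟨a, ?_, ?_⟩, ?_⟩
  · rw [List.getElem?_append_left (by omega)]; exact hia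
  · rw [List.getElem?_append_left hj]; exact hja
  · rw [frag_append_left (le_of_lt hj)]; exact hfor

lemma node_append_right {F G : List (Paren α)} {i j : ℕ} (h : IsNode G i j) :
    IsNode (F ++ G) (F.length + i) (F.length + j) := by
  obtain ⟨hij, hj, ⟨a, hia, hja⟩, hfor⟩ := h
  refine ⟨by omega, by simp; omega, ⟨a, ?_, ?_⟩, ?_⟩
  · rw [List.getElem?_append_right (by omega), Nat.add_sub_cancel_left]; exact hia
  · rw [List.getElem?_append_right (by omega), Nat.add_sub_cancel_left]; exact hja
  · rw [show F.length + i + 1 = F.length + (i + 1) by ring, frag_append_right]; exact hfor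

lemma node_wrap_root (F : List (Paren α)) (a : α) (hF : IsForest F) :
    IsNode ((true, a) :: F ++ [(false, a)]) 0 (F.length + 1) := by
  refine ⟨by omega, by simp, ⟨a, by simp, ?_⟩, ?_⟩
  · rw [List.cons_append, List.getElem?_cons_succ, List.getElem?_append_right (le_refl _)]
    simp
  · have : frag ((true, a) :: F ++ [(false, a)]) 1 (F.length + 1) = F := by
      unfold frag
      rw [List.cons_append, List.take_succ_cons, List.drop_succ_cons, List.drop_zero,
        List.take_append, List.take_length, Nat.sub_self]
      simp
    rw [this]; exact hF

lemma node_wrap_inner {F : List (Paren α)} {i j : ℕ} (a : α) (h : IsNode F i j) :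
    IsNode ((true, a) :: F ++ [(false, a)]) (i + 1) (j + 1) := by
  obtain ⟨hij, hj, ⟨b, hib, hjb⟩, hfor⟩ := h
  refine ⟨by omega, by simp; omega, ⟨b, ?_, ?_⟩, ?_⟩
  · rw [List.cons_append, List.getElem?_cons_succ, List.getElem?_append_left (by omega)]
    exact hib
  · rw [List.cons_append, List.getElem?_cons_succ, List.getElem?_append_left hj]
    exact hjb
  · rw [List.cons_append, frag_cons, frag_append_left (le_of_lt hj)]
    exact hfor

lemma mateRel_symm {S : List (Paren α)} {p q : ℕ} (h : MateRel S p q) : MateRel S q p :=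
  h.elim Or.inr Or.inl

lemma isForest_total {S : List (Paren α)} (h : IsForest S) :
    ∀ p, p < S.length → ∃ q, MateRel S p q := by
  induction h with
  | nil => intro p hp; simp at hp
  | @append F G hF hG ihF ihG =>
    intro p hp
    rw [List.length_append] at hp
    by_cases hpF : p < F.length
    · obtain ⟨q, hq⟩ := ihF p hpF
      exact ⟨q, hq.elim (fun h => Or.inl (node_append_left h))
        (fun h => Or.inr (node_append_left h))⟩
    · obtain ⟨q, hq⟩ := ihG (p - F.length) (by omega)
      refine ⟨F.length + q, ?_⟩
      have hp' : p = F.length + (p - F.length) := by omega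
      rw [hp']
      exact hq.elim (fun h => Or.inl (node_append_right h))
        (fun h => Or.inr (node_append_right h))
  | @wrap F a hF ih =>
    intro p hp
    have hlen : ((true, a) :: F ++ [(false, a)]).length = F.length + 2 := by simp
    rw [hlen] at hp
    rcases Nat.eq_zero_or_pos p with h0 | hpos
    · subst h0; exact ⟨F.length + 1, Or.inl (node_wrap_root F a hF)⟩
    · by_cases hend : p = F.length + 1
      · subst hend; exact ⟨0, Or.inr (node_wrap_root F a hF)⟩
      · obtain ⟨t, rfl⟩ : ∃ t, p = t + 1 := ⟨p - 1, by omega⟩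
        obtain ⟨q, hq⟩ := ih t (by omega)
        exact ⟨q + 1, hq.elim (fun h => Or.inl (node_wrap_inner a h))
          (fun h => Or.inr (node_wrap_inner a h))⟩

lemma mateRel_match {S : List (Paren α)} {p q : ℕ} (h : MateRel S p q) :
    Match S p q ∨ Match S q p :=
  h.elim (fun h => Or.inl (isNode_match h)) (fun h => Or.inr (isNode_match h))

lemma mateRel_unique {S : List (Paren α)} {p q q' : ℕ}
    (h : MateRel S p q) (h' : MateRel S p q') : q = q' := by
  rcases h with h | h <;> rcases h' with h' | h'
  · exact match_unique_right (isNode_match h) (isNode_match h')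
  · exact absurd (isNode_opens h) (fun ho => not_opens_and_closes ho (isNode_closes h'))
  · exact absurd (isNode_opens h') (fun ho => not_opens_and_closes ho (isNode_closes h))
  · exact match_unique_left (isNode_match h) (isNode_match h')

/-- Non-crossing: the mate of a position strictly inside a node lies strictly inside. -/
lemma noncross {S : List (Paren α)} {x y z m : ℕ} (hxy : IsNode S x y)
    (h1 : x < z) (h2 : z < y) (hm : MateRel S z m) : x < m ∧ m < y := by
  have hMxy := isNode_match hxy
  by_contra hcon
  push_neg at hcon
  -- m ≤ x or m ≥ y
  rcases hm with hzm | hmz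
  · -- IsNode S z m : z < m, so m ≥ y; m = y or m > y
    have hMzm := isNode_match hzm
    have hzltm := hMzm.1
    rcases eq_or_lt_of_le (show y ≤ m by omega) with heq | hlt
    · -- m = y : Match z y and Match x y force z = x
      rw [← heq] at hMzm
      exact absurd (match_unique_left hMzm hMxy) (by omega)
    · -- m > y : crossing, y+1 ∈ (z, m]
      have ha := hMzm.2.2.2.2.2 (y + 1) (by omega) (by omega)
      have hb := hMxy.2.2.2.2.2 z h1 (by omega)
      rw [hMxy.2.2.2.2.1] at ha
      omega
  · -- IsNode S m z : m < z, so m ≤ x; m = x or m < x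
    have hMmz := isNode_match hmz
    have hmltz := hMmz.1
    rcases eq_or_lt_of_le (show m ≤ x by omega) with heq | hlt
    · rw [heq] at hMmz
      exact absurd (match_unique_right hMmz hMxy) (by omega)
    · -- m < x : x ∈ (m, z], dep x > dep m; z+1 ∈ (x, y], dep (z+1) > dep x; but dep (z+1) = dep m
      have ha := hMmz.2.2.2.2.2 x hlt (by omega)
      have hb := hMxy.2.2.2.2.2 (z + 1) (by omega) (by omega)
      rw [hMmz.2.2.2.2.1] at hb
      omega

end TedAux
namespace TedAux
variable {α : Type*}

/-! ### Kept positions, the index map `phi`, and the induced subforest -/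

def kept (F : List (Paren α)) (f f' p : ℕ) : Prop :=
  f ≤ p ∧ p < f' ∧ ∃ q, f ≤ q ∧ q < f' ∧ MateRel F p q

noncomputable def KL (F : List (Paren α)) (f f' : ℕ) : List ℕ :=
  (List.range F.length).filter (fun p => decide (kept F f f' p))

noncomputable def phi (F : List (Paren α)) (f f' : ℕ) (x : ℕ) : ℕ :=
  (KL F f f').countP (fun p => decide (p < x))

variable {F : List (Paren α)} {f f' : ℕ}

lemma mem_KL {p : ℕ} (hf' : f' ≤ F.length) : p ∈ KL F f f' ↔ kept F f f' p := by
  unfold KL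
  rw [List.mem_filter, List.mem_range]
  constructor
  · intro h; exact of_decide_eq_true h.2
  · intro h; exact ⟨by have := h.2.1; omega, decide_eq_true h⟩

lemma KL_pairwise : (KL F f f').Pairwise (· < ·) :=
  (List.pairwise_lt_range (n := F.length)).filter _

lemma KL_nodup : (KL F f f').Nodup :=
  KL_pairwise.imp Nat.ne_of_lt

lemma countP_lt_succ (l : List ℕ) (hl : l.Nodup) (x : ℕ) :
    l.countP (fun p => decide (p < x + 1)) =
      l.countP (fun p => decide (p < x)) + (if x ∈ l then 1 else 0) := by
  induction l with
  | nil => simp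
  | cons a l ih =>
    rw [List.countP_cons, List.countP_cons, ih (List.Nodup.of_cons hl)]
    have hax : a ∈ (a :: l) := (List.mem_cons_self (a := a) (l := l))
    by_cases hx : x = a
    · subst hx
      have hxl : x ∉ l := (List.nodup_cons.mp hl).1
      simp [hxl]
    · by_cases h1 : a < x
      · have h2 : a < x + 1 := by omega
        simp only [List.mem_cons, hx, false_or]
        simp [h1, h2]
        ring
      · have h2 : ¬ (a < x + 1) := by omega
        simp only [List.mem_cons, hx, false_or]
        simp [h1, h2]

lemma phi_succ (hf' : f' ≤ F.length) (x : ℕ) :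
    phi F f f' (x + 1) = phi F f f' x + (if kept F f f' x then 1 else 0) := by
  unfold phi
  rw [countP_lt_succ _ KL_nodup]
  congr 1
  by_cases h : kept F f f' x <;> simp [h, mem_KL hf']

lemma phi_le_phi (x y : ℕ) (h : x ≤ y) : phi F f f' x ≤ phi F f f' y := by
  unfold phi
  apply List.countP_mono_left  -- might not exist; fallback below
  intro a _ ha
  have := of_decide_eq_true ha
  exact decide_eq_true (by omega)

lemma phi_le_length (x : ℕ) : phi F f f' x ≤ (KL F f f').length :=
  List.countP_le_length

lemma sorted_getElem_countP :
    ∀ (l : List ℕ), l.Pairwise (· < ·) → ∀ {x : ℕ}, x ∈ l →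
      l[l.countP (fun p => decide (p < x))]? = some x := by
  intro l
  induction l with
  | nil => intro _ x hx; cases hx
  | cons a l ih =>
    intro hl x hx
    rw [List.countP_cons]
    rcases List.mem_cons.mp hx with rfl | hx'
    · have hz : l.countP (fun p => decide (p < x)) = 0 := by
        rw [List.countP_eq_zero]
        intro p hp
        have := (List.pairwise_cons.mp hl).1 p hp
        simp; omega
      rw [hz]
      simp
    · have ha : a < x := (List.pairwise_cons.mp hl).1 x hx'
      have : (if (fun p => decide (p < x)) a = true then 1 else 0) = 1 := by simp [ha]
      rw [this, List.getElem?_cons_succ]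
      exact ih (List.pairwise_cons.mp hl).2 hx'

lemma KL_getElem_phi (hf' : f' ≤ F.length) {x : ℕ} (hx : kept F f f' x) :
    (KL F f f')[phi F f f' x]? = some x :=
  sorted_getElem_countP _ KL_pairwise ((mem_KL hf').mpr hx)

lemma phi_lt_length (hf' : f' ≤ F.length) {x : ℕ} (hx : kept F f f' x) :
    phi F f f' x < (KL F f f').length := by
  have := KL_getElem_phi hf' hx
  by_contra h
  rw [List.getElem?_eq_none (by omega)] at this
  cases this

lemma phi_inj (hf' : f' ≤ F.length) {x y : ℕ} (hx : kept F f f' x) (hy : kept F f f' y)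
    (h : phi F f f' x = phi F f f' y) : x = y := by
  have h1 := KL_getElem_phi hf' hx
  rw [h, KL_getElem_phi hf' hy] at h1
  exact (Option.some.inj h1).symm

lemma KL_index (hf' : f' ≤ F.length) {u : ℕ} {x : ℕ} (h : (KL F f f')[u]? = some x) :
    kept F f f' x ∧ phi F f f' x = u := by
  have hx : x ∈ KL F f f' := List.mem_of_getElem? h
  have hk : kept F f f' x := (mem_KL hf').mp hx
  refine ⟨hk, ?_⟩
  have h2 := KL_getElem_phi hf' hk
  have hu : u < (KL F f f').length := by
    by_contra hc
    rw [List.getElem?_eq_none (by omega)] at h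
    cases h
  exact (List.getElem?_inj (phi_lt_length hf' hk) KL_nodup).mp (h2.trans h.symm)

lemma phi_bot (hf : f ≤ f') : phi F f f' f = 0 := by
  unfold phi
  rw [List.countP_eq_zero]
  intro p hp
  have : kept F f f' p ∧ p < F.length := by
    unfold KL at hp
    rw [List.mem_filter, List.mem_range] at hp
    exact ⟨of_decide_eq_true hp.2, hp.1⟩
  simp
  exact this.1.1

lemma phi_top : phi F f f' f' = (KL F f f').length := by
  unfold phi
  rw [List.countP_eq_length]
  intro p hp
  have : kept F f f' p := by
    unfold KL at hp
    rw [List.mem_filter] at hp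
    exact of_decide_eq_true hp.2
  simp
  exact this.2.1

/-! ### the induced subforest via `KL` -/

lemma filterMap_filter' {β γ : Type*} (q : β → Prop) [DecidablePred q] (g : β → Option γ)
    (l : List β) :
    (l.filter (fun a => decide (q a))).filterMap g
      = l.filterMap (fun a => if q a then g a else none) := by
  induction l with
  | nil => rfl
  | cons a l ih =>
    by_cases h : q a
    · simp [List.filter_cons, List.filterMap_cons, h, ih]
    · simp [List.filter_cons, List.filterMap_cons, h, ih]

lemma filterMap_getElem?' {β γ : Type*} (g : β → Option γ) :
    ∀ (l : List β), (∀ p ∈ l, (g p).isSome) →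
      ∀ u : ℕ, (List.filterMap g l)[u]? = l[u]?.bind g := by
  intro l
  induction l with
  | nil => intro _ u; simp
  | cons a l ih =>
    intro hg u
    obtain ⟨b, hb⟩ := Option.isSome_iff_exists.mp (hg a ((List.mem_cons_self (a := a) (l := l))))
    rw [List.filterMap_cons, hb]
    cases u with
    | zero => simp [hb]
    | succ n =>
      rw [List.getElem?_cons_succ, List.getElem?_cons_succ,
        ih (fun p hp => hg p (List.mem_cons_of_mem a hp)) n]

lemma induced_eq : induced F f f' = (KL F f f').filterMap (fun p => F[p]?) := by
  unfold KL
  rw [filterMap_filter' (q := kept F f f')]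
  unfold induced kept
  congr!

lemma KL_isSome : ∀ p ∈ KL F f f', (F[p]?).isSome := by
  intro p hp
  unfold KL at hp
  rw [List.mem_filter, List.mem_range] at hp
  rw [List.getElem?_eq_getElem hp.1]
  rfl

lemma induced_length : (induced F f f').length = (KL F f f').length := by
  rw [induced_eq]
  rw [List.filterMap_length_eq_length.mpr KL_isSome]

lemma induced_getElem? (u : ℕ) : (induced F f f')[u]? = (KL F f f')[u]?.bind (fun p => F[p]?) := by
  rw [induced_eq, filterMap_getElem?' _ _ KL_isSome]

lemma induced_get (hf' : f' ≤ F.length) {x : ℕ} (hx : kept F f f' x) :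
    (induced F f f')[phi F f f' x]? = F[x]? := by
  rw [induced_getElem?, KL_getElem_phi hf' hx]
  rfl

end TedAux
namespace TedAux
variable {α : Type*} {F : List (Paren α)} {f f' : ℕ}

lemma kept_mate (hF : IsForest F) {x m : ℕ} (hx : kept F f f' x) (hm : MateRel F x m)
    (hmem : f ≤ m ∧ m < f') : kept F f f' m :=
  ⟨hmem.1, hmem.2, x, hx.1, hx.2.1, mateRel_symm hm⟩

lemma kept_mate_window (hF : IsForest F) {x m : ℕ} (hx : kept F f f' x)
    (hm : MateRel F x m) : f ≤ m ∧ m < f' := by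
  obtain ⟨_, _, q, hq1, hq2, hq⟩ := hx
  have := mateRel_unique hm hq
  subst this
  exact ⟨hq1, hq2⟩

lemma interior_kept (hF : IsForest F) (hf' : f' ≤ F.length) {x y z : ℕ}
    (hxy : IsNode F x y) (hx : kept F f f' x) (hy : kept F f f' y)
    (h1 : x < z) (h2 : z < y) : kept F f f' z := by
  obtain ⟨m, hm⟩ := isForest_total hF z (by have := hy.2.1; omega)
  have hmxy := noncross hxy h1 h2 hm
  have hfx := hx.1
  have hyf := hy.2.1
  exact ⟨by omega, by omega, m, by omega, by omega, hm⟩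

lemma phi_add (hf' : f' ≤ F.length) {x y : ℕ} (hxy : x ≤ y)
    (h : ∀ z, x ≤ z → z < y → kept F f f' z) :
    phi F f f' y = phi F f f' x + (y - x) := by
  induction y, hxy using Nat.le_induction with
  | base => simp
  | succ y hy ih =>
    rw [phi_succ hf', ih (fun z hz1 hz2 => h z hz1 (by omega)), if_pos (h y hy (by omega))]
    omega

lemma phi_succ_kept (hf' : f' ≤ F.length) {x : ℕ} (hx : kept F f f' x) :
    phi F f f' (x + 1) = phi F f f' x + 1 := by
  rw [phi_succ hf', if_pos hx]

lemma phi_succ_not (hf' : f' ≤ F.length) {x : ℕ} (hx : ¬ kept F f f' x) :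
    phi F f f' (x + 1) = phi F f f' x := by
  rw [phi_succ hf', if_neg hx]
  omega

/-- M1: nodes with both endpoints kept map to nodes of the induced subforest. -/
lemma node_induced (hF : IsForest F) (hf' : f' ≤ F.length) {x y : ℕ}
    (hxy : IsNode F x y) (hx : kept F f f' x) (hy : kept F f f' y) :
    IsNode (induced F f f') (phi F f f' x) (phi F f f' y) := by
  have hxley : x < y := hxy.1
  have hallk : ∀ z, x ≤ z → z < y → kept F f f' z := by
    intro z hz1 hz2
    rcases eq_or_lt_of_le hz1 with rfl | hlt
    · exact hx
    · exact interior_kept hF hf' hxy hx hy hlt hz2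
  have hphiy : phi F f f' y = phi F f f' x + (y - x) := phi_add hf' (le_of_lt hxley) hallk
  obtain ⟨hij, hjlen, ⟨a, hia, hja⟩, hfor⟩ := hxy
  refine ⟨by omega, ?_, ⟨a, ?_, ?_⟩, ?_⟩
  · rw [induced_length]
    exact phi_lt_length hf' hy
  · rw [induced_get hf' hx]; exact hia
  · rw [induced_get hf' hy]; exact hja
  · have hfrag : frag (induced F f f') (phi F f f' x + 1) (phi F f f' y) = frag F (x + 1) y := by
      apply List.ext_getElem?
      intro t
      rw [frag_getElem?, frag_getElem?]
      by_cases ht : x + 1 + t < y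
      · have hz : kept F f f' (x + 1 + t) := hallk _ (by omega) ht
        have hphiz : phi F f f' (x + 1 + t) = phi F f f' x + 1 + t := by
          rw [phi_add hf' (show x ≤ x + 1 + t by omega)
            (fun z hz1 hz2 => hallk z hz1 (by omega))]
          omega
        rw [if_pos (by omega), if_pos ht, ← hphiz, induced_get hf' hz]
      · rw [if_neg (by omega), if_neg ht]
    rw [hfrag]
    exact hfor

lemma mateRel_induced (hF : IsForest F) (hf' : f' ≤ F.length) {x y : ℕ}
    (hxy : MateRel F x y) (hx : kept F f f' x) (hy : kept F f f' y) :
    MateRel (induced F f f') (phi F f f' x) (phi F f f' y) :=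
  hxy.elim (fun h => Or.inl (node_induced hF hf' h hx hy))
    (fun h => Or.inr (node_induced hF hf' h hy hx))

/-- M2: nodes of the induced subforest come from kept nodes. -/
lemma node_induced_rev (hF : IsForest F) (hf' : f' ≤ F.length) {u v : ℕ}
    (h : IsNode (induced F f f') u v) :
    ∃ x y, kept F f f' x ∧ kept F f f' y ∧ IsNode F x y ∧ u = phi F f f' x ∧ v = phi F f f' y := by
  have hu : u < (KL F f f').length := by
    have h0 := h.1
    have := h.2.1
    rw [induced_length] at this
    omega
  obtain ⟨x, hx⟩ : ∃ x, (KL F f f')[u]? = some x := by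
    rw [List.getElem?_eq_getElem hu]; exact ⟨_, rfl⟩
  obtain ⟨hkx, hphix⟩ := KL_index hf' hx
  obtain ⟨_, _, m, hm1, hm2, hm⟩ := id hkx
  have hkm : kept F f f' m := kept_mate hF hkx hm ⟨hm1, hm2⟩
  -- orientation: F[x] is an opening parenthesis
  have hopen : Opens F x := by
    have h1 := isNode_opens h
    unfold Opens at *
    rw [← hphix, induced_get hf' hkx] at h1
    exact h1
  have hnode : IsNode F x m := by
    rcases hm with hm | hm
    · exact hm
    · exact absurd hopen (fun ho => not_opens_and_closes ho (isNode_closes hm))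
  have h2 := node_induced hF hf' hnode hkx hkm
  rw [hphix] at h2
  have := match_unique_right (isNode_match h) (isNode_match h2)
  exact ⟨x, m, hkx, hkm, hnode, hphix.symm, this⟩

lemma mateRel_induced_rev (hF : IsForest F) (hf' : f' ≤ F.length) {u v : ℕ}
    (h : MateRel (induced F f f') u v) :
    ∃ x y, kept F f f' x ∧ kept F f f' y ∧ MateRel F x y ∧ u = phi F f f' x ∧ v = phi F f f' y := by
  rcases h with h | h
  · obtain ⟨x, y, h1, h2, h3, h4, h5⟩ := node_induced_rev hF hf' h
    exact ⟨x, y, h1, h2, Or.inl h3, h4, h5⟩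
  · obtain ⟨y, x, h1, h2, h3, h4, h5⟩ := node_induced_rev hF hf' h
    exact ⟨x, y, h2, h1, Or.inr h3, h5, h4⟩

lemma lbl_induced (hf' : f' ≤ F.length) {x : ℕ} (hx : kept F f f' x) :
    lbl (induced F f f') (phi F f f' x) = lbl F x := by
  unfold lbl
  rw [induced_get hf' hx]

end TedAux
namespace TedAux
variable {α : Type*}

/-! ### Path helpers -/

noncomputable def eCost (w : Option α → Option α → ℝ≥0) (X Y : List (Paren α))
    (p q : ℕ × ℕ) : ℝ≥0 :=
  if q.1 = p.1 + 1 ∧ q.2 = p.2 then (1 / 2 : ℝ≥0) * w (lbl X p.1) none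
  else if q.1 = p.1 ∧ q.2 = p.2 + 1 then (1 / 2 : ℝ≥0) * w none (lbl Y p.2)
  else (1 / 2 : ℝ≥0) * w (lbl X p.1) (lbl Y p.2)

lemma pathCost_cons_cons (w : Option α → Option α → ℝ≥0) (X Y : List (Paren α))
    (a b : ℕ × ℕ) (r : List (ℕ × ℕ)) :
    pathCost w X Y (a :: b :: r) = eCost w X Y a b + pathCost w X Y (b :: r) := rfl

lemma pathCost_cons_head (w : Option α → Option α → ℝ≥0) (X Y : List (Paren α))
    {l : List (ℕ × ℕ)} {b : ℕ × ℕ} (a : ℕ × ℕ) (hl : l.head? = some b) :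
    pathCost w X Y (a :: l) = eCost w X Y a b + pathCost w X Y l := by
  cases l with
  | nil => cases hl
  | cons c r =>
    rw [List.head?_cons] at hl
    rw [← Option.some.inj hl, pathCost_cons_cons]

lemma eCost_horiz (w : Option α → Option α → ℝ≥0) (X Y : List (Paren α)) (x y : ℕ) :
    eCost w X Y (x, y) (x + 1, y) = (1 / 2 : ℝ≥0) * w (lbl X x) none := by
  simp [eCost]

lemma eCost_vert (w : Option α → Option α → ℝ≥0) (X Y : List (Paren α)) (x y : ℕ) :
    eCost w X Y (x, y) (x, y + 1) = (1 / 2 : ℝ≥0) * w none (lbl Y y) := by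
  have h1 : ¬ (x = x + 1 ∧ y + 1 = y) := by omega
  have h2 : (x = x ∧ y + 1 = y + 1) := ⟨rfl, rfl⟩
  simp [eCost, h1, h2]

lemma eCost_diag (w : Option α → Option α → ℝ≥0) (X Y : List (Paren α)) (x y : ℕ) :
    eCost w X Y (x, y) (x + 1, y + 1) = (1 / 2 : ℝ≥0) * w (lbl X x) (lbl Y y) := by
  have h1 : ¬ (x + 1 = x + 1 ∧ y + 1 = y) := by omega
  have h2 : ¬ (x + 1 = x ∧ y + 1 = y + 1) := by omega
  simp [eCost, h1, h2]

lemma aligns_cons_of {l : List (ℕ × ℕ)} {v : ℕ × ℕ} {a b : ℕ}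
    (h : AlignsAt l a b) : AlignsAt (v :: l) a b := by
  obtain ⟨t, h1, h2⟩ := h
  exact ⟨t + 1, by rwa [List.getElem?_cons_succ], by rwa [List.getElem?_cons_succ]⟩

lemma aligns_cons_elim {l : List (ℕ × ℕ)} {v : ℕ × ℕ} {a b : ℕ}
    (h : AlignsAt (v :: l) a b) :
    (v = (a, b) ∧ l[0]? = some (a + 1, b + 1)) ∨ AlignsAt l a b := by
  obtain ⟨t, h1, h2⟩ := h
  cases t with
  | zero =>
    left
    rw [List.getElem?_cons_zero] at h1
    rw [List.getElem?_cons_succ] at h2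
    exact ⟨Option.some.inj h1, h2⟩
  | succ n =>
    right
    rw [List.getElem?_cons_succ] at h1 h2
    exact ⟨n, h1, h2⟩

lemma aligns_nil {a b : ℕ} : ¬ AlignsAt [] a b := by
  rintro ⟨t, h1, _⟩
  simp at h1

lemma aligns_single {v : ℕ × ℕ} {a b : ℕ} : ¬ AlignsAt [v] a b := by
  rintro ⟨t, h1, h2⟩
  rcases aligns_cons_elim ⟨t, h1, h2⟩ with ⟨_, h⟩ | h
  · simp at h
  · exact aligns_nil h

lemma alignStep_le {v w : ℕ × ℕ} (h : AlignStep v w) : v.1 ≤ w.1 ∧ v.2 ≤ w.2 := by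
  rcases h with h | h | h <;> (subst h; constructor <;> simp)

lemma chain_le_last :
    ∀ {p : List (ℕ × ℕ)}, p.Chain' AlignStep → ∀ {a l : ℕ × ℕ}, a ∈ p →
      p.getLast? = some l → a.1 ≤ l.1 ∧ a.2 ≤ l.2 := by
  intro p
  induction p with
  | nil => intro _ a l ha; cases ha
  | cons v r ih =>
    intro hc a l ha hl
    cases r with
    | nil =>
      rcases List.mem_singleton.mp ha with rfl
      simp at hl
      subst hl
      exact ⟨le_refl _, le_refl _⟩
    | cons v' r' =>
      rw [List.getLast?_cons_cons] at hl
      have hc' := (List.isChain_cons_cons.mp hc).2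
      have hstep := (List.isChain_cons_cons.mp hc).1
      rcases List.mem_cons.mp ha with rfl | ha'
      · have h1 := alignStep_le hstep
        have h2 := ih hc' ((List.mem_cons_self (a := v') (l := r'))) hl
        exact ⟨le_trans h1.1 h2.1, le_trans h1.2 h2.2⟩
      · exact ih hc' ha' hl

lemma chain_head_le :
    ∀ {p : List (ℕ × ℕ)}, p.Chain' AlignStep → ∀ {a h : ℕ × ℕ}, a ∈ p →
      p.head? = some h → h.1 ≤ a.1 ∧ h.2 ≤ a.2 := by
  intro p
  induction p with
  | nil => intro _ a h ha; cases ha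
  | cons v r ih =>
    intro hc a h ha hh
    rw [List.head?_cons] at hh
    rcases Option.some.inj hh with rfl
    rcases List.mem_cons.mp ha with rfl | ha'
    · exact ⟨le_refl _, le_refl _⟩
    · cases r with
      | nil => cases ha'
      | cons v' r' =>
        have hc' := (List.isChain_cons_cons.mp hc).2
        have hstep := alignStep_le (List.isChain_cons_cons.mp hc).1
        have := ih hc' ha' (by rw [List.head?_cons])
        exact ⟨le_trans hstep.1 this.1, le_trans hstep.2 this.2⟩

lemma getLast?_cons_of_head {l : List (ℕ × ℕ)} {b : ℕ × ℕ} (a : ℕ × ℕ)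
    (hl : l.head? = some b) : (a :: l).getLast? = l.getLast? := by
  cases l with
  | nil => cases hl
  | cons c r => rw [List.getLast?_cons_cons]

lemma chain'_cons_of_head {l : List (ℕ × ℕ)} {b : ℕ × ℕ} {a : ℕ × ℕ}
    (hl : l.head? = some b) (hab : AlignStep a b) (hc : l.Chain' AlignStep) :
    (a :: l).Chain' AlignStep := by
  cases l with
  | nil => cases hl
  | cons c r =>
    rw [List.head?_cons] at hl
    rcases Option.some.inj hl with rfl
    exact List.isChain_cons_cons.mpr ⟨hab, hc⟩

lemma mem_of_aligns_fst {l : List (ℕ × ℕ)} {a b : ℕ} (h : AlignsAt l a b) :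
    (a, b) ∈ l ∧ (a + 1, b + 1) ∈ l := by
  obtain ⟨t, h1, h2⟩ := h
  exact ⟨List.mem_of_getElem? h1, List.mem_of_getElem? h2⟩

end TedAux
namespace TedAux
variable {α : Type*} {w : Option α → Option α → ℝ≥0} {F G : List (Paren α)} {f f' g g' : ℕ}

/-- Collapsing a consistent fragment alignment into an alignment of the induced
subforests, with exact cost bookkeeping. -/
lemma collapse_ex (hf'l : f' ≤ F.length) (hg'l : g' ≤ G.length) :
    ∀ (p : List (ℕ × ℕ)) (x y : ℕ),
      p.head? = some (x, y) → p.getLast? = some (f', g') → p.Chain' AlignStep →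
      (∀ a b, AlignsAt p a b → kept F f f' a ∧ kept G g g' b) →
      ∃ q : List (ℕ × ℕ),
        q.head? = some (phi F f f' x, phi G g g' y) ∧
        q.getLast? = some (phi F f f' f', phi G g g' g') ∧
        q.Chain' AlignStep ∧
        pathCost w F G p =
          pathCost w (induced F f f') (induced G g g') q
          + (∑ i ∈ Finset.Ico x f', if kept F f f' i then 0 else (1/2 : ℝ≥0) * w (lbl F i) none)
          + (∑ j ∈ Finset.Ico y g', if kept G g g' j then 0 else (1/2 : ℝ≥0) * w none (lbl G j)) ∧
        (∀ a b, AlignsAt p a b → AlignsAt q (phi F f f' a) (phi G g g' b)) ∧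
        (∀ u v, AlignsAt q u v → ∃ a b, AlignsAt p a b ∧ u = phi F f f' a ∧ v = phi G g g' b) := by
  intro p
  induction p with
  | nil => intro x y hhd; cases hhd
  | cons v r ih =>
    intro x y hhd hlast hchain hdiag
    rw [List.head?_cons] at hhd
    rcases Option.some.inj hhd with rfl
    cases r with
    | nil =>
      simp only [List.getLast?_singleton] at hlast
      rcases Option.some.inj hlast with ⟨rfl, rfl⟩
      refine ⟨[(phi F f f' f', phi G g g' g')], by simp, by simp, List.isChain_singleton _, ?_,
        fun a b h => absurd h aligns_single, fun u v h => absurd h aligns_single⟩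
      simp [pathCost]
    | cons v' r' =>
      obtain ⟨x₂, y₂⟩ := v'
      rw [List.getLast?_cons_cons] at hlast
      have hchain' := (List.isChain_cons_cons.mp hchain).2
      have hstep := (List.isChain_cons_cons.mp hchain).1
      have hdiag' : ∀ a b, AlignsAt ((x₂, y₂) :: r') a b → kept F f f' a ∧ kept G g g' b :=
        fun a b h => hdiag a b (aligns_cons_of h)
      have hbound := chain_le_last hchain' ((List.mem_cons_self (a := _) (l := _))) hlast
      have hhd' : ((x₂, y₂) :: r').head? = some (x₂, y₂) := rfl
      rcases hstep with hH | hV | hD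
      · -- horizontal step
        have hx2 : x₂ = x + 1 := by simpa using congrArg Prod.fst hH
        have hy2 : y = y₂ := by simpa using (congrArg Prod.snd hH).symm
        subst hx2; subst hy2
        obtain ⟨q', hq1, hq2, hq3, hq4, hq5, hq6⟩ := ih (x + 1) y hhd' hlast hchain' hdiag'
        have hxf : x < f' := by have := hbound.1; simpa using this
        have htzero : ∀ a b : ℕ, ¬ ((x, y) = (a, b) ∧
            ((x + 1, y) :: r')[0]? = some (a + 1, b + 1)) := by
          rintro a b ⟨h1, h2⟩
          simp only [List.getElem?_cons_zero, Option.some.injEq] at h2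
          simp only [Prod.mk.injEq] at h1 h2
          omega
        by_cases hkx : kept F f f' x
        · refine ⟨(phi F f f' x, phi G g g' y) :: q', by simp, ?_, ?_, ?_, ?_, ?_⟩
          · rw [getLast?_cons_of_head _ hq1]; exact hq2
          · refine chain'_cons_of_head hq1 ?_ hq3
            rw [phi_succ_kept hf'l hkx]
            exact Or.inl rfl
          · rw [pathCost_cons_cons, pathCost_cons_head w _ _ _ hq1, hq4,
              Finset.sum_eq_sum_Ico_succ_bot hxf, if_pos hkx, eCost_horiz,
              phi_succ_kept hf'l hkx, eCost_horiz, lbl_induced hf'l hkx]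
            ring
          · intro a b h
            rcases aligns_cons_elim h with hbad | h'
            · exact absurd hbad (htzero a b)
            · exact aligns_cons_of (hq5 a b h')
          · intro u v h
            rcases aligns_cons_elim h with ⟨h1, h2⟩ | h'
            · exfalso
              rw [← List.head?_eq_getElem?, hq1] at h2
              simp only [Prod.mk.injEq, Option.some.injEq] at h1 h2
              have := phi_succ_kept hf'l hkx
              omega
            · obtain ⟨a, b, ha, hb, hc⟩ := hq6 u v h'
              exact ⟨a, b, aligns_cons_of ha, hb, hc⟩
        · refine ⟨q', ?_, hq2, hq3, ?_, ?_, ?_⟩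
          · rw [hq1, phi_succ_not hf'l hkx]
          · rw [pathCost_cons_cons, eCost_horiz, hq4,
              Finset.sum_eq_sum_Ico_succ_bot hxf, if_neg hkx]
            ring
          · intro a b h
            rcases aligns_cons_elim h with hbad | h'
            · exact absurd hbad (htzero a b)
            · exact hq5 a b h'
          · intro u v h
            obtain ⟨a, b, ha, hb, hc⟩ := hq6 u v h
            exact ⟨a, b, aligns_cons_of ha, hb, hc⟩
      · -- vertical step
        have hy2 : y₂ = y + 1 := by simpa using congrArg Prod.snd hV
        have hx2 : x = x₂ := by simpa using (congrArg Prod.fst hV).symm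
        subst hy2; subst hx2
        obtain ⟨q', hq1, hq2, hq3, hq4, hq5, hq6⟩ := ih x (y + 1) hhd' hlast hchain' hdiag'
        have hyg : y < g' := by have := hbound.2; simpa using this
        have htzero : ∀ a b : ℕ, ¬ ((x, y) = (a, b) ∧
            ((x, y + 1) :: r')[0]? = some (a + 1, b + 1)) := by
          rintro a b ⟨h1, h2⟩
          simp only [List.getElem?_cons_zero, Option.some.injEq] at h2
          simp only [Prod.mk.injEq] at h1 h2
          omega
        by_cases hky : kept G g g' y
        · refine ⟨(phi F f f' x, phi G g g' y) :: q', by simp, ?_, ?_, ?_, ?_, ?_⟩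
          · rw [getLast?_cons_of_head _ hq1]; exact hq2
          · refine chain'_cons_of_head hq1 ?_ hq3
            rw [phi_succ_kept hg'l hky]
            exact Or.inr (Or.inl rfl)
          · rw [pathCost_cons_cons, pathCost_cons_head w _ _ _ hq1, hq4,
              Finset.sum_eq_sum_Ico_succ_bot hyg, if_pos hky, eCost_vert,
              phi_succ_kept hg'l hky, eCost_vert, lbl_induced hg'l hky]
            ring
          · intro a b h
            rcases aligns_cons_elim h with hbad | h'
            · exact absurd hbad (htzero a b)
            · exact aligns_cons_of (hq5 a b h')
          · intro u v h
            rcases aligns_cons_elim h with ⟨h1, h2⟩ | h'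
            · exfalso
              rw [← List.head?_eq_getElem?, hq1] at h2
              simp only [Prod.mk.injEq, Option.some.injEq] at h1 h2
              have := phi_succ_kept hg'l hky
              omega
            · obtain ⟨a, b, ha, hb, hc⟩ := hq6 u v h'
              exact ⟨a, b, aligns_cons_of ha, hb, hc⟩
        · refine ⟨q', ?_, hq2, hq3, ?_, ?_, ?_⟩
          · rw [hq1, phi_succ_not hg'l hky]
          · rw [pathCost_cons_cons, eCost_vert, hq4,
              Finset.sum_eq_sum_Ico_succ_bot hyg, if_neg hky]
            ring
          · intro a b h
            rcases aligns_cons_elim h with hbad | h'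
            · exact absurd hbad (htzero a b)
            · exact hq5 a b h'
          · intro u v h
            obtain ⟨a, b, ha, hb, hc⟩ := hq6 u v h
            exact ⟨a, b, aligns_cons_of ha, hb, hc⟩
      · -- diagonal step
        have hx2 : x₂ = x + 1 := by simpa using congrArg Prod.fst hD
        have hy2 : y₂ = y + 1 := by simpa using congrArg Prod.snd hD
        subst hx2; subst hy2
        obtain ⟨q', hq1, hq2, hq3, hq4, hq5, hq6⟩ := ih (x + 1) (y + 1) hhd' hlast hchain' hdiag'
        have hxf : x < f' := by have := hbound.1; simpa using this
        have hyg : y < g' := by have := hbound.2; simpa using this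
        have hXY : AlignsAt ((x, y) :: (x + 1, y + 1) :: r') x y :=
          ⟨0, by simp, by simp⟩
        obtain ⟨hkx, hky⟩ := hdiag x y hXY
        refine ⟨(phi F f f' x, phi G g g' y) :: q', by simp, ?_, ?_, ?_, ?_, ?_⟩
        · rw [getLast?_cons_of_head _ hq1]; exact hq2
        · refine chain'_cons_of_head hq1 ?_ hq3
          rw [phi_succ_kept hf'l hkx, phi_succ_kept hg'l hky]
          exact Or.inr (Or.inr rfl)
        · rw [pathCost_cons_cons, pathCost_cons_head w _ _ _ hq1, hq4,
            Finset.sum_eq_sum_Ico_succ_bot hxf, Finset.sum_eq_sum_Ico_succ_bot hyg,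
            if_pos hkx, if_pos hky, eCost_diag,
            phi_succ_kept hf'l hkx, phi_succ_kept hg'l hky, eCost_diag,
            lbl_induced hf'l hkx, lbl_induced hg'l hky]
          ring
        · intro a b h
          rcases aligns_cons_elim h with ⟨h1, h2⟩ | h'
          · rw [List.getElem?_cons_zero] at h2
            simp only [Prod.mk.injEq] at h1 h2
            obtain ⟨rfl, rfl⟩ : x = a ∧ y = b := by omega
            refine ⟨0, by simp, ?_⟩
            have he : ((phi F f f' x, phi G g g' y) :: q')[0 + 1]? = q'[0]? :=
              List.getElem?_cons_succ
            rw [he, ← List.head?_eq_getElem?, hq1, phi_succ_kept hf'l hkx,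
              phi_succ_kept hg'l hky]
          · exact aligns_cons_of (hq5 a b h')
        · intro u v h
          rcases aligns_cons_elim h with ⟨h1, h2⟩ | h'
          · simp only [Prod.mk.injEq] at h1
            exact ⟨x, y, hXY, h1.1.symm, h1.2.symm⟩
          · obtain ⟨a, b, ha, hb, hc⟩ := hq6 u v h'
            exact ⟨a, b, aligns_cons_of ha, hb, hc⟩

end TedAux
namespace TedAux
variable {α : Type*} {w : Option α → Option α → ℝ≥0} {F G : List (Paren α)} {f f' g g' : ℕ}

/-- Expanding an alignment of the induced subforests into a fragment alignment. -/
lemma expand_ex (hf'l : f' ≤ F.length) (hg'l : g' ≤ G.length) :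
    ∀ (N : ℕ) (q : List (ℕ × ℕ)) (x y : ℕ),
      (f' - x) + (g' - y) + q.length ≤ N →
      q.head? = some (phi F f f' x, phi G g g' y) →
      q.getLast? = some (phi F f f' f', phi G g g' g') →
      q.Chain' AlignStep →
      f ≤ x → x ≤ f' → g ≤ y → y ≤ g' →
      ∃ p : List (ℕ × ℕ),
        p.head? = some (x, y) ∧ p.getLast? = some (f', g') ∧ p.Chain' AlignStep ∧
        pathCost w F G p =
          pathCost w (induced F f f') (induced G g g') q
          + (∑ i ∈ Finset.Ico x f', if kept F f f' i then 0 else (1/2:ℝ≥0) * w (lbl F i) none)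
          + (∑ j ∈ Finset.Ico y g', if kept G g g' j then 0 else (1/2:ℝ≥0) * w none (lbl G j)) ∧
        (∀ a b, AlignsAt p a b →
          kept F f f' a ∧ kept G g g' b ∧ AlignsAt q (phi F f f' a) (phi G g g' b)) ∧
        (∀ u v, AlignsAt q u v → ∃ a b, kept F f f' a ∧ kept G g g' b ∧
          phi F f f' a = u ∧ phi G g g' b = v ∧ AlignsAt p a b) := by
  intro N
  induction N with
  | zero =>
    intro q x y hN hhd
    cases q with
    | nil => cases hhd
    | cons v r => simp at hN
  | succ N ihN =>
    intro q x y hN hhd hlast hchain hfx hxf hgy hyg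
    by_cases hc1 : x < f' ∧ ¬ kept F f f' x
    · -- skip a straddling F position (horizontal edge)
      obtain ⟨hxlt, hkx⟩ := hc1
      have hhd2 : q.head? = some (phi F f f' (x + 1), phi G g g' y) := by
        rw [phi_succ_not hf'l hkx]; exact hhd
      obtain ⟨p', hp1, hp2, hp3, hp4, hp5, hp6⟩ :=
        ihN q (x + 1) y (by omega) hhd2 hlast hchain (by omega) (by omega) hgy hyg
      refine ⟨(x, y) :: p', by simp, ?_, ?_, ?_, ?_, ?_⟩
      · rw [getLast?_cons_of_head _ hp1]; exact hp2
      · exact chain'_cons_of_head hp1 (Or.inl rfl) hp3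
      · rw [pathCost_cons_head w _ _ _ hp1, eCost_horiz, hp4,
          Finset.sum_eq_sum_Ico_succ_bot hxlt, if_neg hkx]
        ring
      · intro a b h
        rcases aligns_cons_elim h with ⟨h1, h2⟩ | h'
        · exfalso
          rw [← List.head?_eq_getElem?, hp1] at h2
          simp only [Prod.mk.injEq, Option.some.injEq] at h1 h2
          omega
        · exact hp5 a b h'
      · intro u v h
        obtain ⟨a, b, h1, h2, h3, h4, h5⟩ := hp6 u v h
        exact ⟨a, b, h1, h2, h3, h4, aligns_cons_of h5⟩
    · by_cases hc2 : y < g' ∧ ¬ kept G g g' y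
      · -- skip a straddling G position (vertical edge)
        obtain ⟨hylt, hky⟩ := hc2
        have hhd2 : q.head? = some (phi F f f' x, phi G g g' (y + 1)) := by
          rw [phi_succ_not hg'l hky]; exact hhd
        obtain ⟨p', hp1, hp2, hp3, hp4, hp5, hp6⟩ :=
          ihN q x (y + 1) (by omega) hhd2 hlast hchain hfx hxf (by omega) (by omega)
        refine ⟨(x, y) :: p', by simp, ?_, ?_, ?_, ?_, ?_⟩
        · rw [getLast?_cons_of_head _ hp1]; exact hp2
        · exact chain'_cons_of_head hp1 (Or.inr (Or.inl rfl)) hp3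
        · rw [pathCost_cons_head w _ _ _ hp1, eCost_vert, hp4,
            Finset.sum_eq_sum_Ico_succ_bot hylt, if_neg hky]
          ring
        · intro a b h
          rcases aligns_cons_elim h with ⟨h1, h2⟩ | h'
          · exfalso
            rw [← List.head?_eq_getElem?, hp1] at h2
            simp only [Prod.mk.injEq, Option.some.injEq] at h1 h2
            omega
          · exact hp5 a b h'
        · intro u v h
          obtain ⟨a, b, h1, h2, h3, h4, h5⟩ := hp6 u v h
          exact ⟨a, b, h1, h2, h3, h4, aligns_cons_of h5⟩
      · -- mirror the first edge of q
        push_neg at hc1 hc2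
        have hx3 : x < f' → kept F f f' x := fun h => hc1 h
        have hy3 : y < g' → kept G g g' y := fun h => hc2 h
        cases q with
        | nil => cases hhd
        | cons v r =>
          rw [List.head?_cons] at hhd
          rcases Option.some.inj hhd with rfl
          cases r with
          | nil =>
            simp only [List.getLast?_singleton, Option.some.injEq, Prod.mk.injEq] at hlast
            have hxe : x = f' := by
              by_contra hne
              have hxlt : x < f' := by omega
              have hk := hx3 hxlt
              have h1 : phi F f f' (x + 1) = phi F f f' x + 1 := phi_succ_kept hf'l hk
              have h2 : phi F f f' (x + 1) ≤ phi F f f' f' := phi_le_phi _ _ (by omega)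
              omega
            have hye : y = g' := by
              by_contra hne
              have hylt : y < g' := by omega
              have hk := hy3 hylt
              have h1 : phi G g g' (y + 1) = phi G g g' y + 1 := phi_succ_kept hg'l hk
              have h2 : phi G g g' (y + 1) ≤ phi G g g' g' := phi_le_phi _ _ (by omega)
              omega
            refine ⟨[(x, y)], by simp, by simp [hxe, hye], List.isChain_singleton _, ?_,
              fun a b h => absurd h aligns_single, fun u v h => absurd h aligns_single⟩
            simp [pathCost, hxe, hye]
          | cons v' r' =>
            obtain ⟨u₂, v₂⟩ := v'
            rw [List.getLast?_cons_cons] at hlast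
            have hchain' := (List.isChain_cons_cons.mp hchain).2
            have hstep := (List.isChain_cons_cons.mp hchain).1
            have hbound := chain_le_last hchain' ((List.mem_cons_self (a := _) (l := _))) hlast
            have hhd' : ((u₂, v₂) :: r').head? = some (u₂, v₂) := rfl
            rcases hstep with hH | hV | hD
            · -- horizontal edge of q
              have hu2 : u₂ = phi F f f' x + 1 := by simpa using congrArg Prod.fst hH
              have hv2 : v₂ = phi G g g' y := by simpa using congrArg Prod.snd hH
              subst hu2; subst hv2
              have hxlt : x < f' := by
                by_contra hne
                have : x = f' := by omega
                subst this
                have := hbound.1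
                simp at this
              have hkx := hx3 hxlt
              have hhd2 : ((phi F f f' x + 1, phi G g g' y) :: r').head?
                  = some (phi F f f' (x + 1), phi G g g' y) := by
                rw [phi_succ_kept hf'l hkx]; rfl
              obtain ⟨p', hp1, hp2, hp3, hp4, hp5, hp6⟩ :=
                ihN _ (x + 1) y (by simp at hN ⊢; omega) hhd2 hlast hchain'
                  (by omega) (by omega) hgy hyg
              refine ⟨(x, y) :: p', by simp, ?_, ?_, ?_, ?_, ?_⟩
              · rw [getLast?_cons_of_head _ hp1]; exact hp2
              · exact chain'_cons_of_head hp1 (Or.inl rfl) hp3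
              · rw [pathCost_cons_head w _ _ _ hp1, eCost_horiz,
                  pathCost_cons_cons, eCost_horiz, lbl_induced hf'l hkx, hp4,
                  Finset.sum_eq_sum_Ico_succ_bot hxlt, if_pos hkx]
                ring
              · intro a b h
                rcases aligns_cons_elim h with ⟨h1, h2⟩ | h'
                · exfalso
                  rw [← List.head?_eq_getElem?, hp1] at h2
                  simp only [Prod.mk.injEq, Option.some.injEq] at h1 h2
                  omega
                · obtain ⟨k1, k2, k3⟩ := hp5 a b h'
                  exact ⟨k1, k2, aligns_cons_of k3⟩
              · intro u v h
                rcases aligns_cons_elim h with ⟨h1, h2⟩ | h'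
                · exfalso
                  rw [List.getElem?_cons_zero] at h2
                  simp only [Prod.mk.injEq, Option.some.injEq] at h1 h2
                  omega
                · obtain ⟨a, b, h1, h2, h3, h4, h5⟩ := hp6 u v h'
                  exact ⟨a, b, h1, h2, h3, h4, aligns_cons_of h5⟩
            · -- vertical edge of q
              have hu2 : u₂ = phi F f f' x := by simpa using congrArg Prod.fst hV
              have hv2 : v₂ = phi G g g' y + 1 := by simpa using congrArg Prod.snd hV
              subst hu2; subst hv2
              have hylt : y < g' := by
                by_contra hne
                have : y = g' := by omega
                subst this
                have := hbound.2
                simp at this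
              have hky := hy3 hylt
              have hhd2 : ((phi F f f' x, phi G g g' y + 1) :: r').head?
                  = some (phi F f f' x, phi G g g' (y + 1)) := by
                rw [phi_succ_kept hg'l hky]; rfl
              obtain ⟨p', hp1, hp2, hp3, hp4, hp5, hp6⟩ :=
                ihN _ x (y + 1) (by simp at hN ⊢; omega) hhd2 hlast hchain'
                  hfx hxf (by omega) (by omega)
              refine ⟨(x, y) :: p', by simp, ?_, ?_, ?_, ?_, ?_⟩
              · rw [getLast?_cons_of_head _ hp1]; exact hp2
              · exact chain'_cons_of_head hp1 (Or.inr (Or.inl rfl)) hp3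
              · rw [pathCost_cons_head w _ _ _ hp1, eCost_vert,
                  pathCost_cons_cons, eCost_vert, lbl_induced hg'l hky, hp4,
                  Finset.sum_eq_sum_Ico_succ_bot hylt, if_pos hky]
                ring
              · intro a b h
                rcases aligns_cons_elim h with ⟨h1, h2⟩ | h'
                · exfalso
                  rw [← List.head?_eq_getElem?, hp1] at h2
                  simp only [Prod.mk.injEq, Option.some.injEq] at h1 h2
                  omega
                · obtain ⟨k1, k2, k3⟩ := hp5 a b h'
                  exact ⟨k1, k2, aligns_cons_of k3⟩
              · intro u v h
                rcases aligns_cons_elim h with ⟨h1, h2⟩ | h'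
                · exfalso
                  rw [List.getElem?_cons_zero] at h2
                  simp only [Prod.mk.injEq, Option.some.injEq] at h1 h2
                  omega
                · obtain ⟨a, b, h1, h2, h3, h4, h5⟩ := hp6 u v h'
                  exact ⟨a, b, h1, h2, h3, h4, aligns_cons_of h5⟩
            · -- diagonal edge of q
              have hu2 : u₂ = phi F f f' x + 1 := by simpa using congrArg Prod.fst hD
              have hv2 : v₂ = phi G g g' y + 1 := by simpa using congrArg Prod.snd hD
              subst hu2; subst hv2
              have hxlt : x < f' := by
                by_contra hne
                have : x = f' := by omega
                subst this
                have := hbound.1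
                simp at this
              have hylt : y < g' := by
                by_contra hne
                have : y = g' := by omega
                subst this
                have := hbound.2
                simp at this
              have hkx := hx3 hxlt
              have hky := hy3 hylt
              have hhd2 : ((phi F f f' x + 1, phi G g g' y + 1) :: r').head?
                  = some (phi F f f' (x + 1), phi G g g' (y + 1)) := by
                rw [phi_succ_kept hf'l hkx, phi_succ_kept hg'l hky]; rfl
              obtain ⟨p', hp1, hp2, hp3, hp4, hp5, hp6⟩ :=
                ihN _ (x + 1) (y + 1) (by simp at hN ⊢; omega) hhd2 hlast hchain'
                  (by omega) (by omega) (by omega) (by omega)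
              have hQ0 : AlignsAt ((phi F f f' x, phi G g g' y)
                  :: (phi F f f' x + 1, phi G g g' y + 1) :: r') (phi F f f' x) (phi G g g' y) :=
                ⟨0, by simp, by simp⟩
              refine ⟨(x, y) :: p', by simp, ?_, ?_, ?_, ?_, ?_⟩
              · rw [getLast?_cons_of_head _ hp1]; exact hp2
              · exact chain'_cons_of_head hp1 (Or.inr (Or.inr rfl)) hp3
              · rw [pathCost_cons_head w _ _ _ hp1, eCost_diag,
                  pathCost_cons_cons, eCost_diag, lbl_induced hf'l hkx, lbl_induced hg'l hky, hp4,
                  Finset.sum_eq_sum_Ico_succ_bot hxlt, Finset.sum_eq_sum_Ico_succ_bot hylt,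
                  if_pos hkx, if_pos hky]
                ring
              · intro a b h
                rcases aligns_cons_elim h with ⟨h1, h2⟩ | h'
                · rw [← List.head?_eq_getElem?, hp1] at h2
                  simp only [Prod.mk.injEq, Option.some.injEq] at h1 h2
                  obtain ⟨rfl, rfl⟩ : x = a ∧ y = b := by omega
                  exact ⟨hkx, hky, hQ0⟩
                · obtain ⟨k1, k2, k3⟩ := hp5 a b h'
                  exact ⟨k1, k2, aligns_cons_of k3⟩
              · intro u v h
                rcases aligns_cons_elim h with ⟨h1, h2⟩ | h'
                · simp only [Prod.mk.injEq] at h1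
                  refine ⟨x, y, hkx, hky, h1.1, h1.2, 0, by simp, ?_⟩
                  rw [List.getElem?_cons_succ, ← List.head?_eq_getElem?, hp1]
                · obtain ⟨a, b, h1, h2, h3, h4, h5⟩ := hp6 u v h'
                  exact ⟨a, b, h1, h2, h3, h4, aligns_cons_of h5⟩

end TedAux
namespace TedAux
variable {α : Type*} {w : Option α → Option α → ℝ≥0} {F G : List (Paren α)} {f f' g g' : ℕ}

lemma consistent_diag_kept (hF : IsForest F) (hG : IsForest G)
    (hf'l : f' ≤ F.length) (hg'l : g' ≤ G.length)
    {p : List (ℕ × ℕ)} (hAl : IsAlignment f f' g g' p) (hC : Consistent F G p) :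
    ∀ a b, AlignsAt p a b → kept F f f' a ∧ kept G g g' b := by
  intro a b hab
  obtain ⟨hhd, hlast, hchain⟩ := hAl
  have hmem := mem_of_aligns_fst hab
  have hb1 := chain_head_le hchain hmem.1 hhd
  have hb2 := chain_le_last hchain hmem.2 hlast
  have hfa : f ≤ a := by simpa using hb1.1
  have hgb : g ≤ b := by simpa using hb1.2
  have haf : a + 1 ≤ f' := by simpa using hb2.1
  have hbg : b + 1 ≤ g' := by simpa using hb2.2
  obtain ⟨m, hm⟩ := isForest_total hF a (by omega)
  obtain ⟨r, hr⟩ := isForest_total hG b (by omega)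
  have hmr := hC a b m r hab hm hr
  have hmem2 := mem_of_aligns_fst hmr
  have hc1 := chain_head_le hchain hmem2.1 hhd
  have hc2 := chain_le_last hchain hmem2.2 hlast
  have h1 : f ≤ m := by simpa using hc1.1
  have h2 : g ≤ r := by simpa using hc1.2
  have h3 : m + 1 ≤ f' := by simpa using hc2.1
  have h4 : r + 1 ≤ g' := by simpa using hc2.2
  exact ⟨⟨hfa, by omega, m, h1, by omega, hm⟩, ⟨hgb, by omega, r, h2, by omega, hr⟩⟩

lemma straddle_eq :
    straddleCost w F G f f' g g' =
      (∑ i ∈ Finset.Ico f f', if kept F f f' i then 0 else (1/2 : ℝ≥0) * w (lbl F i) none)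
      + (∑ j ∈ Finset.Ico g g', if kept G g g' j then 0 else (1/2 : ℝ≥0) * w none (lbl G j)) := by
  unfold straddleCost
  congr 1
  · apply Finset.sum_congr rfl
    intro i hi
    rw [Finset.mem_Ico] at hi
    have h : (∃ q, f ≤ q ∧ q < f' ∧ MateRel F i q) ↔ kept F f f' i := by
      unfold kept; tauto
    simp only [h]
  · apply Finset.sum_congr rfl
    intro j hj
    rw [Finset.mem_Ico] at hj
    have h : (∃ q, g ≤ q ∧ q < g' ∧ MateRel G j q) ↔ kept G g g' j := by
      unfold kept; tauto
    simp only [h]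

lemma phi_top' : phi F f f' f' = (induced F f f').length := by
  rw [induced_length, phi_top]

lemma cost_sub_straddle (c q' : ℝ≥0)
    (h : c = q' + (∑ i ∈ Finset.Ico f f', if kept F f f' i then 0
        else (1/2 : ℝ≥0) * w (lbl F i) none)
      + (∑ j ∈ Finset.Ico g g', if kept G g g' j then 0
        else (1/2 : ℝ≥0) * w none (lbl G j))) :
    (c : ℝ≥0∞) - (straddleCost w F G f f' g g' : ℝ≥0∞) = (q' : ℝ≥0∞) := by
  rw [h, straddle_eq, add_assoc]
  rw [ENNReal.coe_add, ENNReal.coe_add]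
  rw [ENNReal.add_sub_cancel_right (by exact ENNReal.coe_ne_top)]

end TedAux
/-- Observation 2.8: for all forests `F, G`, fragments
`F[f..f')` and `G[g..g')`, and weight functions `w`, the adjusted tree edit
distance of the fragments equals the tree edit distance of the induced
subforests. -/
theorem tedTilde_eq_ted_induced {α : Type*} (F G : List (Paren α))
    (hF : IsForest F) (hG : IsForest G)
    (f f' g g' : ℕ) (hf : f ≤ f') (hf' : f' ≤ F.length) (hg : g ≤ g') (hg' : g' ≤ G.length)
    (w : Option α → Option α → ℝ≥0) :
    tedTilde w F G f f' g g' =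
      tedFrag w (induced F f f') (induced G g g')
        0 (induced F f f').length 0 (induced G g g').length := by
  apply le_antisymm
  · -- tedTilde ≤ tedFrag of the induced subforests
    refine le_iInf ?_
    rintro ⟨q, ⟨hq_hd, hq_last, hq_ch⟩, hq_cons⟩
    have hhd : q.head? = some (TedAux.phi F f f' f, TedAux.phi G g g' g) := by
      rw [TedAux.phi_bot hf, TedAux.phi_bot hg]; exact hq_hd
    have hlast : q.getLast? = some (TedAux.phi F f f' f', TedAux.phi G g g' g') := by
      rw [TedAux.phi_top', TedAux.phi_top']; exact hq_last
    obtain ⟨p, hp1, hp2, hp3, hp4, hp5, hp6⟩ :=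
      TedAux.expand_ex hf' hg' (f' - f + (g' - g) + q.length) q f g (le_refl _) hhd hlast hq_ch
        (le_refl _) hf (le_refl _) hg
    refine iInf_le_of_le ⟨p, ⟨hp1, hp2, hp3⟩, ?_⟩ ?_
    · intro a b a₂ b₂ hab hMa hMb
      obtain ⟨hka, hkb, hq_ab⟩ := hp5 a b hab
      have hwa := TedAux.kept_mate_window hF hka hMa
      have hka2 : TedAux.kept F f f' a₂ := TedAux.kept_mate hF hka hMa hwa
      have hwb := TedAux.kept_mate_window hG hkb hMb
      have hkb2 : TedAux.kept G g g' b₂ := TedAux.kept_mate hG hkb hMb hwb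
      have hMa' := TedAux.mateRel_induced hF hf' hMa hka hka2
      have hMb' := TedAux.mateRel_induced hG hg' hMb hkb hkb2
      have hq_ab2 := hq_cons _ _ _ _ hq_ab hMa' hMb'
      obtain ⟨a', b', hka', hkb', hpa', hpb', hpab⟩ := hp6 _ _ hq_ab2
      rwa [TedAux.phi_inj hf' hka' hka2 hpa', TedAux.phi_inj hg' hkb' hkb2 hpb'] at hpab
    · exact le_of_eq (TedAux.cost_sub_straddle _ _ hp4)
  · -- tedFrag of the induced subforests ≤ tedTilde
    refine le_iInf ?_
    rintro ⟨p, ⟨hp_hd, hp_last, hp_ch⟩, hp_cons⟩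
    have hdiag := TedAux.consistent_diag_kept hF hG hf' hg' ⟨hp_hd, hp_last, hp_ch⟩ hp_cons
    obtain ⟨q, hq1, hq2, hq3, hq4, hq5, hq6⟩ :=
      TedAux.collapse_ex hf' hg' p f g hp_hd hp_last hp_ch hdiag
    refine iInf_le_of_le ⟨q, ⟨?_, ?_, hq3⟩, ?_⟩ ?_
    · rw [hq1, TedAux.phi_bot hf, TedAux.phi_bot hg]
    · rw [hq2, TedAux.phi_top', TedAux.phi_top']
    · intro u v u₂ v₂ huv hMu hMv
      obtain ⟨a, b, hab, hua, hvb⟩ := hq6 u v huv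
      obtain ⟨hka, hkb⟩ := hdiag a b hab
      obtain ⟨x₁, x₂, hk1, hk2, hM, hux, hu2x⟩ := TedAux.mateRel_induced_rev hF hf' hMu
      obtain ⟨y₁, y₂, hl1, hl2, hN, hvy, hv2y⟩ := TedAux.mateRel_induced_rev hG hg' hMv
      have hax : a = x₁ := TedAux.phi_inj hf' hka hk1 (by rw [← hua, ← hux])
      have hby : b = y₁ := TedAux.phi_inj hg' hkb hl1 (by rw [← hvb, ← hvy])
      have hMab2 : MateRel F a x₂ := by rw [hax]; exact hM
      have hNab2 : MateRel G b y₂ := by rw [hby]; exact hN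
      have hpx2 := hp_cons a b x₂ y₂ hab hMab2 hNab2
      have hqx2 := hq5 x₂ y₂ hpx2
      rwa [← hu2x, ← hv2y] at hqx2
    · exact le_of_eq (TedAux.cost_sub_straddle _ _ hq4).symm
end

section
/- Let w : (Σ∪{ε})² → ℝ≥0 be a normalized weight function, k ∈ ℤ+ a threshold, and F, G ∈ F_Σ forests. If ted^w(F,G) ≤ k, then ted^w(F,G) = bted_k^w(F,G), where bted_k^w(F,G) is the minimum cost over forest alignments of F onto G of width at most 2k. -/
open scoped NNReal ENNReal

attribute [local instance] Classical.propDecidable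

/-- Number of non-diagonal edges of a path. -/
def ndCount : List (ℕ × ℕ) → ℕ
  | [] => 0
  | [_] => 0
  | p :: q :: rest => (if q = (p.1 + 1, p.2 + 1) then 0 else 1) + ndCount (q :: rest)

lemma chain_mono : ∀ (l : List (ℕ × ℕ)) (p r : ℕ × ℕ), List.Chain' AlignStep l →
    l.head? = some p → l.getLast? = some r → p.1 ≤ r.1 ∧ p.2 ≤ r.2 := by
  intro l
  induction l with
  | nil => intro p r _ hp; simp at hp
  | cons a t ih =>
    intro p r hc hp hr
    simp at hp; subst hp
    cases t with
    | nil => simp at hr; subst hr; exact ⟨le_rfl, le_rfl⟩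
    | cons b t' =>
      rw [List.getLast?_cons_cons] at hr
      rw [List.Chain', List.isChain_cons_cons] at hc
      have h2 := ih b r hc.2 (by simp) hr
      rcases hc.1 with h | h | h <;> rw [h] at h2 <;> simp at h2 <;> omega

/-- Width bound via number of non-diagonal edges. -/
lemma width_le_ndCount : ∀ (l : List (ℕ × ℕ)) (p : ℕ × ℕ), List.Chain' AlignStep l →
    l.head? = some p → ∀ q ∈ l,
      q.1 + p.2 ≤ q.2 + p.1 + ndCount l ∧ q.2 + p.1 ≤ q.1 + p.2 + ndCount l := by
  intro l
  induction l with
  | nil => intro p _ _ q hq; simp at hq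
  | cons a t ih =>
    intro p hc hp q hq
    simp at hp; subst hp
    cases t with
    | nil =>
      simp at hq; subst hq
      simp [ndCount]
      omega
    | cons b t' =>
      rw [List.Chain', List.isChain_cons_cons] at hc
      have hnd : ndCount (a :: b :: t') = (if b = (a.1 + 1, a.2 + 1) then 0 else 1)
          + ndCount (b :: t') := rfl
      rcases List.mem_cons.mp hq with hq | hq
      · subst hq; omega
      · have h2 := ih b hc.2 (by simp) q hq
        rcases hc.1 with h | h | h <;> subst h <;> simp at h2 hnd ⊢ <;> omega

/-- Each non-diagonal edge costs at least `1/2` when the path ends at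
`(F.length, G.length)`. -/
lemma ndCount_le_two_mul_cost {α : Type*} (w : Option α → Option α → ℝ≥0)
    (hw : Normalized w) (F G : List (Paren α)) :
    ∀ (l : List (ℕ × ℕ)), List.Chain' AlignStep l →
      l.getLast? = some (F.length, G.length) →
      (ndCount l : ℝ≥0) ≤ 2 * pathCost w F G l := by
  intro l
  induction l with
  | nil => intro _ _; simp [ndCount, pathCost]
  | cons a t ih =>
    intro hc hr
    cases t with
    | nil => simp [ndCount, pathCost]
    | cons b t' =>
      rw [List.getLast?_cons_cons] at hr
      rw [List.Chain', List.isChain_cons_cons] at hc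
      have hIH := ih hc.2 hr
      have hmono := chain_mono (b :: t') b (F.length, G.length) hc.2 (by simp) hr
      have hnd : ndCount (a :: b :: t') = (if b = (a.1 + 1, a.2 + 1) then 0 else 1)
          + ndCount (b :: t') := rfl
      have hpc : pathCost w F G (a :: b :: t') =
          (if b.1 = a.1 + 1 ∧ b.2 = a.2 then (1 / 2 : ℝ≥0) * w (lbl F a.1) none
           else if b.1 = a.1 ∧ b.2 = a.2 + 1 then (1 / 2 : ℝ≥0) * w none (lbl G a.2)
           else (1 / 2 : ℝ≥0) * w (lbl F a.1) (lbl G a.2)) + pathCost w F G (b :: t') := rfl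
      rcases hc.1 with h | h | h
      · -- horizontal edge
        subst h
        have ha1 : a.1 < F.length := by
          have := hmono.1; simp at this; omega
        have hlbl : lbl F a.1 = some (F[a.1]).2 := by
          simp [lbl, List.getElem?_eq_getElem ha1]
        have hw1 : (1 : ℝ≥0) ≤ w (lbl F a.1) none := by
          rw [hlbl]; exact hw.2 _ _ (by simp)
        rw [hnd, hpc, if_neg (by simp), if_pos ⟨rfl, rfl⟩]
        push_cast [mul_add]
        have h1 : (1 : ℝ≥0) ≤ 2 * ((1 / 2 : ℝ≥0) * w (lbl F a.1) none) := by
          rw [← mul_assoc]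
          norm_num
          exact hw1
        exact add_le_add h1 hIH
      · -- vertical edge
        subst h
        have ha2 : a.2 < G.length := by
          have := hmono.2; simp at this; omega
        have hlbl : lbl G a.2 = some (G[a.2]).2 := by
          simp [lbl, List.getElem?_eq_getElem ha2]
        have hw1 : (1 : ℝ≥0) ≤ w none (lbl G a.2) := by
          rw [hlbl]; exact hw.2 _ _ (by simp)
        rw [hnd, hpc, if_neg (by simp), if_neg (by simp), if_pos ⟨rfl, rfl⟩]
        push_cast [mul_add]
        have h1 : (1 : ℝ≥0) ≤ 2 * ((1 / 2 : ℝ≥0) * w none (lbl G a.2)) := by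
          rw [← mul_assoc]
          norm_num
          exact hw1
        exact add_le_add h1 hIH
      · -- diagonal edge
        subst h
        rw [hnd, hpc, if_pos rfl]
        push_cast [mul_add]
        rw [zero_add]
        exact le_trans hIH (le_add_of_nonneg_left zero_le)

/-- Observation 3.4: for a normalized weight function `w` and a
threshold `k ∈ ℤ₊`, if `ted^w(F, G) ≤ k` then `ted^w(F, G) = bted_k^w(F, G)`. -/
theorem ted_eq_bted_of_le {α : Type*} (w : Option α → Option α → ℝ≥0)
    (hw : Normalized w) (k : ℕ) (hk : 0 < k)
    (F G : List (Paren α)) (hF : IsForest F) (hG : IsForest G)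
    (h : tedFrag w F G 0 F.length 0 G.length ≤ (k : ℝ≥0∞)) :
    tedFrag w F G 0 F.length 0 G.length = btedFrag k w F G 0 F.length 0 G.length := by
  refine le_antisymm ?_ ?_
  · exact le_iInf fun ⟨p, h1, h2, _⟩ => iInf_le_of_le ⟨p, h1, h2⟩ le_rfl
  · set T := tedFrag w F G 0 F.length 0 G.length with hT
    refine ENNReal.le_of_forall_pos_le_add fun ε hε hfin => ?_
    set δ : ℝ≥0 := min ε (1/4) with hδ
    have hδ0 : 0 < δ := lt_min hε (by norm_num)
    have hTne : T ≠ ⊤ := ne_top_of_le_ne_top (by simp) h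
    have hlt : T < T + δ := ENNReal.lt_add_right hTne (by exact_mod_cast hδ0.ne')
    rw [hT, tedFrag, iInf_lt_iff] at hlt
    obtain ⟨⟨p, hal, hcons⟩, hplt⟩ := hlt
    have hcost : (pathCost w F G p : ℝ≥0∞) < (k : ℝ≥0) + (1/4 : ℝ≥0) := by
      calc (pathCost w F G p : ℝ≥0∞) < T + δ := hplt
        _ ≤ (k : ℝ≥0∞) + ((1/4 : ℝ≥0) : ℝ≥0∞) :=
            add_le_add h (by exact_mod_cast min_le_right _ _)
        _ = ((k : ℝ≥0) + (1/4 : ℝ≥0) : ℝ≥0∞) := by push_cast; ring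
    have hcost' : pathCost w F G p < (k : ℝ≥0) + 1/4 := by exact_mod_cast hcost
    obtain ⟨hhead, hlast, hchain⟩ := hal
    have hnd : (ndCount p : ℝ≥0) ≤ 2 * pathCost w F G p :=
      ndCount_le_two_mul_cost w hw F G p hchain hlast
    have hndk : ndCount p ≤ 2 * k := by
      by_contra hcon
      push_neg at hcon
      have h1 : (2 * k + 1 : ℕ) ≤ ndCount p := hcon
      have h2 : ((2 * k + 1 : ℕ) : ℝ≥0) ≤ 2 * pathCost w F G p :=
        le_trans (by exact_mod_cast h1) hnd
      have h3 : 2 * pathCost w F G p < 2 * ((k : ℝ≥0) + 1/4) := by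
        exact mul_lt_mul_of_pos_left hcost' (by norm_num)
      have h4 : ((2 * k + 1 : ℕ) : ℝ≥0) < 2 * ((k : ℝ≥0) + 1/4) := lt_of_le_of_lt h2 h3
      rw [mul_add] at h4
      push_cast at h4
      have h5 : (1 : ℝ≥0) < 2 * (1/4 : ℝ≥0) := (add_lt_add_iff_left _).mp h4
      have h6 := NNReal.coe_lt_coe.mpr h5
      push_cast at h6
      norm_num at h6
    have hwidth : WidthLE (2 * k) p := by
      intro q hq
      have := width_le_ndCount p (0, 0) hchain hhead q hq
      simp at this
      omega
    calc btedFrag k w F G 0 F.length 0 G.length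
        ≤ (pathCost w F G p : ℝ≥0∞) :=
          iInf_le (fun (x : { p : List (ℕ × ℕ) // IsAlignment 0 F.length 0 G.length p ∧
            Consistent F G p ∧ WidthLE (2 * k) p }) => (pathCost w F G x.1 : ℝ≥0∞))
            ⟨p, ⟨hhead, hlast, hchain⟩, hcons, hwidth⟩
      _ ≤ T + δ := hplt.le
      _ ≤ T + ε := add_le_add le_rfl (by exact_mod_cast min_le_left _ _)
end
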